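/- arXiv:1506.03764 — 5 statements merged into one kernel-verified Lean document; each statement's English description precedes it below -/
import Mathlib

section
/- The binary van der Corput sequence is uniformly distributed modulo 1: for all 0 ≤ a < b ≤ 1, the proportion of n < N with Y₂(n) ∈ [a,b) tends to b - a as N → ∞, where Y₂(n) is the binary radical inverse of n. -/
open scoped Classical
open Filter

/-- The b-adic radical inverse (van der Corput) function. -/
noncomputable def vdc (b n : ℕ) : ℝ :=
  ∑ j ∈ Finset.range (n + 1), ((n / b ^ j % b : ℕ) : ℝ) / (b : ℝ) ^ (j + 1)

namespace VdcAux

noncomputable def S (n m : ℕ) : ℝ :=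
  ∑ j ∈ Finset.range m, ((n / 2 ^ j % 2 : ℕ) : ℝ) / ((2 : ℕ) : ℝ) ^ (j + 1)

lemma S_pad {n m m' : ℕ} (h : n < 2 ^ m) (hm : m ≤ m') : S n m' = S n m := by
  unfold S
  refine (Finset.sum_subset (Finset.range_subset_range.2 hm) ?_).symm
  intro j _ hj'
  simp only [Finset.mem_range, not_lt] at hj'
  have : n / 2 ^ j = 0 :=
    Nat.div_eq_of_lt (lt_of_lt_of_le h (Nat.pow_le_pow_right (by norm_num) hj'))
  simp [this]

lemma vdc_two_def (n : ℕ) : vdc 2 n = S n (n + 1) := rfl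

lemma lt_two_pow_succ (n : ℕ) : n < 2 ^ (n + 1) :=
  lt_of_lt_of_le (Nat.lt_two_pow_self (n := n)) (Nat.pow_le_pow_right (by norm_num) (Nat.le_succ n))

lemma vdc_eq_S {n m : ℕ} (h : n < 2 ^ m) : vdc 2 n = S n m := by
  rw [vdc_two_def]
  rcases le_total m (n + 1) with hle | hle
  · exact S_pad h hle
  · exact (S_pad (lt_two_pow_succ n) hle).symm

lemma S_succ (n m : ℕ) : S n (m + 1) = ((n % 2 : ℕ) : ℝ) / 2 + S (n / 2) m / 2 := by
  unfold S
  rw [Finset.sum_range_succ']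
  have h0 : ((n / 2 ^ 0 % 2 : ℕ) : ℝ) / ((2 : ℕ) : ℝ) ^ (0 + 1) = ((n % 2 : ℕ) : ℝ) / 2 := by
    norm_num
  rw [h0, add_comm]
  congr 1
  rw [Finset.sum_div]
  refine Finset.sum_congr rfl fun j _ => ?_
  have hd : n / 2 ^ (j + 1) = n / 2 / 2 ^ j := by
    rw [Nat.div_div_eq_div_mul, pow_succ']
  rw [hd]
  push_cast
  ring

lemma vdc_rec (n : ℕ) : vdc 2 n = ((n % 2 : ℕ) : ℝ) / 2 + vdc 2 (n / 2) / 2 := by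
  have h1 : n < 2 ^ (n + 1) := lt_two_pow_succ n
  have h2 : n / 2 < 2 ^ (n + 1) := lt_of_le_of_lt (Nat.div_le_self n 2) h1
  have h3 : n < 2 ^ (n + 1 + 1) :=
    lt_of_lt_of_le h1 (Nat.pow_le_pow_right (by norm_num) (Nat.le_succ _))
  rw [vdc_eq_S h3, S_succ, vdc_eq_S h2]

lemma vdc_nonneg (n : ℕ) : 0 ≤ vdc 2 n := by
  rw [vdc_two_def]
  unfold S
  exact Finset.sum_nonneg fun j _ => div_nonneg (Nat.cast_nonneg _) (by positivity)

lemma sum_half_pow (m : ℕ) :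
    ∑ j ∈ Finset.range m, (1 : ℝ) / ((2 : ℕ) : ℝ) ^ (j + 1) = 1 - 1 / 2 ^ m := by
  induction m with
  | zero => simp
  | succ m ih =>
    rw [Finset.sum_range_succ, ih]
    push_cast
    field_simp
    ring

lemma S_le (n m : ℕ) : S n m ≤ 1 - 1 / 2 ^ m := by
  rw [← sum_half_pow m]
  unfold S
  refine Finset.sum_le_sum fun j _ => ?_
  have hd : (n / 2 ^ j % 2 : ℕ) ≤ 1 := Nat.le_of_lt_succ (Nat.mod_lt _ (by norm_num))
  have : ((n / 2 ^ j % 2 : ℕ) : ℝ) ≤ 1 := by exact_mod_cast hd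
  gcongr

lemma vdc_lt_one (n : ℕ) : vdc 2 n < 1 := by
  rw [vdc_two_def]
  have := S_le n (n + 1)
  have h : (0 : ℝ) < 1 / 2 ^ (n + 1) := by positivity
  linarith

/-- bit reversal of the low `k` bits -/
def bitrev : ℕ → ℕ → ℕ
  | 0, _ => 0
  | k + 1, r => r % 2 * 2 ^ k + bitrev k (r / 2)

lemma bitrev_lt (k : ℕ) : ∀ r, bitrev k r < 2 ^ k := by
  induction k with
  | zero => intro r; simp [bitrev]
  | succ k ih =>
    intro r
    have h1 : r % 2 ≤ 1 := Nat.le_of_lt_succ (Nat.mod_lt _ (by norm_num))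
    have h2 := ih (r / 2)
    have h3 : r % 2 * 2 ^ k ≤ 2 ^ k := by
      calc r % 2 * 2 ^ k ≤ 1 * 2 ^ k := Nat.mul_le_mul_right _ h1
      _ = 2 ^ k := one_mul _
    simp only [bitrev, pow_succ]
    omega

lemma bitrev_inj (k : ℕ) : ∀ r r', r < 2 ^ k → r' < 2 ^ k →
    bitrev k r = bitrev k r' → r = r' := by
  induction k with
  | zero => intro r r' hr hr' _; omega
  | succ k ih =>
    intro r r' hr hr' heq
    simp only [bitrev] at heq
    have h2 := bitrev_lt k (r / 2)
    have h2' := bitrev_lt k (r' / 2)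
    have hm : r % 2 = r' % 2 ∧ bitrev k (r / 2) = bitrev k (r' / 2) := by
      rcases Nat.mod_two_eq_zero_or_one r with h | h <;>
        rcases Nat.mod_two_eq_zero_or_one r' with h' | h' <;>
          simp [h, h'] at heq ⊢ <;> omega
    have hdr : r / 2 < 2 ^ k := by
      rw [Nat.div_lt_iff_lt_mul (by norm_num)]
      calc r < 2 ^ (k + 1) := hr
      _ = 2 ^ k * 2 := by rw [pow_succ]
    have hdr' : r' / 2 < 2 ^ k := by
      rw [Nat.div_lt_iff_lt_mul (by norm_num)]
      calc r' < 2 ^ (k + 1) := hr'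
      _ = 2 ^ k * 2 := by rw [pow_succ]
    have := ih (r / 2) (r' / 2) hdr hdr' hm.2
    omega

lemma vdc_zero : vdc 2 0 = 0 := by
  simp [vdc]

lemma vdc_grid (k : ℕ) : ∀ r, r < 2 ^ k → vdc 2 r = (bitrev k r : ℝ) / 2 ^ k := by
  induction k with
  | zero =>
    intro r hr
    interval_cases r
    simp [bitrev, vdc_zero]
  | succ k ih =>
    intro r hr
    have hdr : r / 2 < 2 ^ k := by
      rw [Nat.div_lt_iff_lt_mul (by norm_num)]
      calc r < 2 ^ (k + 1) := hr
      _ = 2 ^ k * 2 := by rw [pow_succ]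
    rw [vdc_rec r, ih (r / 2) hdr]
    simp only [bitrev]
    push_cast
    have h2k : (2 : ℝ) ^ k ≠ 0 := by positivity
    field_simp
    ring

lemma vdc_shift (k : ℕ) : ∀ r, r < 2 ^ k →
    vdc 2 (2 ^ k + r) = vdc 2 r + 1 / 2 ^ (k + 1) := by
  induction k with
  | zero =>
    intro r hr
    interval_cases r
    rw [vdc_zero]
    norm_num [vdc, Finset.sum_range_succ]
  | succ k ih =>
    intro r hr
    have hdr : r / 2 < 2 ^ k := by
      rw [Nat.div_lt_iff_lt_mul (by norm_num)]
      calc r < 2 ^ (k + 1) := hr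
      _ = 2 ^ k * 2 := by rw [pow_succ]
    have hmod : (2 ^ (k + 1) + r) % 2 = r % 2 := by
      have : 2 ^ (k + 1) = 2 * 2 ^ k := by rw [pow_succ]; ring
      omega
    have hdiv : (2 ^ (k + 1) + r) / 2 = 2 ^ k + r / 2 := by
      have : 2 ^ (k + 1) = 2 * 2 ^ k := by rw [pow_succ]; ring
      omega
    rw [vdc_rec (2 ^ (k + 1) + r), hmod, hdiv, ih (r / 2) hdr, vdc_rec r]
    have : (2 : ℝ) ^ (k + 1) ≠ 0 := by positivity
    field_simp
    ring

lemma grid_count (k : ℕ) {a b : ℝ} (ha : 0 ≤ a) (hab : a ≤ b) (hb : b ≤ 1) :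
    |(((Finset.range (2 ^ k)).filter (fun r => vdc 2 r ∈ Set.Ico a b)).card : ℝ)
      - 2 ^ k * (b - a)| ≤ 1 := by
  -- step 1: replace vdc count by grid count via bitrev
  have himg : (Finset.range (2 ^ k)).image (bitrev k) = Finset.range (2 ^ k) := by
    apply Finset.eq_of_subset_of_card_le
    · intro m hm
      simp only [Finset.mem_image, Finset.mem_range] at hm ⊢
      obtain ⟨r, _, rfl⟩ := hm
      exact bitrev_lt k r
    · rw [Finset.card_image_of_injOn, Finset.card_range]
      intro r hr r' hr' h
      exact bitrev_inj k r r' (Finset.mem_range.1 hr) (Finset.mem_range.1 hr') h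
  have hcard : ((Finset.range (2 ^ k)).filter (fun r => vdc 2 r ∈ Set.Ico a b)).card
      = ((Finset.range (2 ^ k)).filter (fun m : ℕ => ((m : ℝ) / 2 ^ k) ∈ Set.Ico a b)).card := by
    apply Finset.card_nbij (i := bitrev k)
    · intro r hr
      simp only [Finset.mem_coe, Finset.mem_filter, Finset.mem_range] at hr ⊢
      refine ⟨bitrev_lt k r, ?_⟩
      rw [← vdc_grid k r hr.1]
      exact hr.2
    · intro r hr r' hr' h
      simp only [Finset.mem_coe, Finset.mem_filter, Finset.mem_range] at hr hr'
      exact bitrev_inj k r r' hr.1 hr'.1 h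
    · intro m hm
      simp only [Finset.mem_coe, Finset.mem_filter, Finset.mem_range] at hm
      have : m ∈ (Finset.range (2 ^ k)).image (bitrev k) := by
        rw [himg]; exact Finset.mem_range.2 hm.1
      simp only [Finset.mem_image, Finset.mem_range] at this
      obtain ⟨r, hr, hrm⟩ := this
      refine ⟨r, ?_, hrm⟩
      simp only [Finset.mem_coe, Finset.mem_filter, Finset.mem_range]
      refine ⟨hr, ?_⟩
      rw [vdc_grid k r hr, hrm]
      exact hm.2
  rw [hcard]
  -- step 2: compute the grid count
  set α : ℝ := a * 2 ^ k with hα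
  set β : ℝ := b * 2 ^ k with hβ
  have h2k : (0 : ℝ) < 2 ^ k := by positivity
  have hfil : (Finset.range (2 ^ k)).filter (fun m : ℕ => ((m : ℝ) / 2 ^ k) ∈ Set.Ico a b)
      = Finset.Ico (⌈α⌉.toNat) (⌈β⌉.toNat) := by
    ext m
    simp only [Finset.mem_filter, Finset.mem_range, Finset.mem_Ico, Set.mem_Ico]
    constructor
    · rintro ⟨hm, h1, h2⟩
      have h1' : α ≤ (m : ℝ) := by
        rw [hα, ← le_div_iff₀ h2k]; exact h1
      have h2' : (m : ℝ) < β := by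
        rw [hβ, ← div_lt_iff₀ h2k]; exact h2
      constructor
      · rw [Int.toNat_le]
        exact_mod_cast Int.ceil_le.2 (by exact_mod_cast h1')
      · exact Int.lt_toNat.2 (Int.lt_ceil.2 (by exact_mod_cast h2'))
    · rintro ⟨h1, h2⟩
      have hβle : ⌈β⌉ ≤ 2 ^ k := by
        apply Int.ceil_le.2
        rw [hβ]
        push_cast
        nlinarith
      have hm2 : (m : ℤ) < ⌈β⌉ := by
        have := Int.lt_toNat.1 h2
        exact_mod_cast this
      have hmlt : m < 2 ^ k := by
        have : (m : ℤ) < 2 ^ k := lt_of_lt_of_le hm2 hβle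
        exact_mod_cast this
      have h1' : α ≤ (m : ℝ) := by
        have hc : ⌈α⌉ ≤ (m : ℤ) := by
          rwa [Int.toNat_le] at h1
        calc α ≤ (⌈α⌉ : ℝ) := Int.le_ceil α
        _ ≤ (m : ℝ) := by exact_mod_cast hc
      have h2' : (m : ℝ) < β := by
        have := Int.lt_ceil.1 hm2
        exact_mod_cast this
      refine ⟨hmlt, ?_, ?_⟩
      · rw [hα] at h1'; rw [le_div_iff₀ h2k]; linarith
      · rw [hβ] at h2'; rw [div_lt_iff₀ h2k]; linarith
  rw [hfil, Nat.card_Ico]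
  have hαnn : 0 ≤ α := by rw [hα]; positivity
  have hceilnn : 0 ≤ ⌈α⌉ := Int.ceil_nonneg hαnn
  have hmono : ⌈α⌉.toNat ≤ ⌈β⌉.toNat := by
    have : ⌈α⌉ ≤ ⌈β⌉ := Int.ceil_le_ceil (by rw [hα, hβ]; nlinarith)
    omega
  have hcast : ((⌈β⌉.toNat - ⌈α⌉.toNat : ℕ) : ℝ) = (⌈β⌉.toNat : ℝ) - (⌈α⌉.toNat : ℝ) := by
    push_cast [Nat.cast_sub hmono]
    ring
  rw [hcast]
  have ha' : (⌈α⌉.toNat : ℝ) = (⌈α⌉ : ℝ) := by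
    exact_mod_cast Int.toNat_of_nonneg hceilnn
  have hβnn : 0 ≤ β := le_trans hαnn (by rw [hα, hβ]; nlinarith)
  have hb' : (⌈β⌉.toNat : ℝ) = (⌈β⌉ : ℝ) := by
    exact_mod_cast Int.toNat_of_nonneg (Int.ceil_nonneg hβnn)
  rw [ha', hb']
  have h1 := Int.le_ceil α
  have h2 := Int.ceil_lt_add_one α
  have h3 := Int.le_ceil β
  have h4 := Int.ceil_lt_add_one β
  have hba : (2 : ℝ) ^ k * (b - a) = β - α := by rw [hα, hβ]; ring
  rw [hba, abs_le]
  constructor <;> linarith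

lemma count_bound (N : ℕ) : ∀ a b : ℝ, 0 ≤ a → a ≤ b → b ≤ 1 →
    |(((Finset.range N).filter (fun n => vdc 2 n ∈ Set.Ico a b)).card : ℝ)
      - N * (b - a)| ≤ 2 * (Nat.log 2 N + 1) := by
  induction N using Nat.strong_induction_on with
  | _ N ih =>
  intro a b ha hab hb
  rcases Nat.eq_zero_or_pos N with rfl | hN
  · norm_num
  set k := Nat.log 2 N with hk
  have h2k : 2 ^ k ≤ N := Nat.pow_log_le_self 2 hN.ne'
  have hN2 : N < 2 ^ (k + 1) := Nat.lt_pow_succ_log_self (by norm_num) N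
  have hpow : 2 ^ (k + 1) = 2 * 2 ^ k := by rw [pow_succ]; ring
  set M := N - 2 ^ k with hM
  have hMlt : M < 2 ^ k := by omega
  have hNsum : N = 2 ^ k + M := by omega
  have h2kpos : 0 < 2 ^ k := Nat.pow_pos (by norm_num)
  set ε : ℝ := 1 / 2 ^ (k + 1) with hε
  have hε0 : 0 < ε := by positivity
  set a' := max (a - ε) 0 with ha'
  set b' := max (b - ε) 0 with hb'
  set P := fun n : ℕ => vdc 2 n ∈ Set.Ico a b with hP
  have hrange : Finset.range N = Finset.range (2 ^ k) ∪ Finset.Ico (2 ^ k) N := by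
    rw [Finset.range_eq_Ico, Finset.range_eq_Ico, Finset.Ico_union_Ico_eq_Ico (Nat.zero_le _) h2k]
  have hdisj : Disjoint ((Finset.range (2 ^ k)).filter P) ((Finset.Ico (2 ^ k) N).filter P) := by
    apply Finset.disjoint_filter_filter
    rw [Finset.range_eq_Ico]
    exact Finset.Ico_disjoint_Ico_consecutive 0 (2 ^ k) N
  have hcardsplit : ((Finset.range N).filter P).card
      = ((Finset.range (2 ^ k)).filter P).card + ((Finset.Ico (2 ^ k) N).filter P).card := by
    rw [hrange, Finset.filter_union, Finset.card_union_of_disjoint hdisj]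
  have hIco : Finset.Ico (2 ^ k) N = (Finset.range M).image (fun r => 2 ^ k + r) := by
    ext x
    simp only [Finset.mem_Ico, Finset.mem_image, Finset.mem_range]
    constructor
    · intro h; exact ⟨x - 2 ^ k, by omega, by omega⟩
    · rintro ⟨r, hr, rfl⟩; omega
  have htail1 : ((Finset.Ico (2 ^ k) N).filter P).card
      = ((Finset.range M).filter (fun r => P (2 ^ k + r))).card := by
    rw [hIco, Finset.filter_image]
    exact Finset.card_image_of_injective _ (add_right_injective _)
  have htail2 : (Finset.range M).filter (fun r => P (2 ^ k + r))
      = (Finset.range M).filter (fun r => vdc 2 r ∈ Set.Ico a' b') := by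
    apply Finset.filter_congr
    intro r hr
    have hrk : r < 2 ^ k := lt_trans (Finset.mem_range.1 hr) hMlt
    have hshift := vdc_shift k r hrk
    have hnn := vdc_nonneg r
    simp only [hP, Set.mem_Ico, hshift, eq_iff_iff]
    constructor
    · rintro ⟨h1, h2⟩
      refine ⟨max_le_iff.2 ⟨by linarith, hnn⟩, ?_⟩
      exact lt_of_lt_of_le (by linarith) (le_max_left _ _)
    · rintro ⟨h1, h2⟩
      have h1' : a - ε ≤ vdc 2 r := le_trans (le_max_left _ _) h1
      have h2' : vdc 2 r < b - ε := by
        rcases lt_max_iff.1 h2 with h | h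
        · exact h
        · linarith
      exact ⟨by linarith, by linarith⟩
  -- the real-number bookkeeping
  have hgrid := grid_count k ha hab hb
  have hcast : (((Finset.range N).filter P).card : ℝ)
      = (((Finset.range (2 ^ k)).filter P).card : ℝ)
        + (((Finset.range M).filter (fun r => vdc 2 r ∈ Set.Ico a' b')).card : ℝ) := by
    rw [hcardsplit, htail1, htail2]
    push_cast
    ring
  have hNr : (N : ℝ) = 2 ^ k + M := by
    rw [hNsum]; push_cast; ring
  rcases Nat.eq_zero_or_pos M with hM0 | hM0
  · -- N = 2^k exactly
    have : (((Finset.range M).filter (fun r => vdc 2 r ∈ Set.Ico a' b')).card : ℝ) = 0 := by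
      rw [hM0]; simp
    rw [hcast, this, hNr, hM0]
    push_cast
    have hrhs : (1 : ℝ) ≤ 2 * ((Nat.log 2 N : ℝ) + 1) := by
      have : (0 : ℝ) ≤ (Nat.log 2 N : ℝ) := Nat.cast_nonneg _
      linarith
    calc |(((Finset.range (2 ^ k)).filter P).card : ℝ) + 0 - ((2 : ℝ) ^ k + 0) * (b - a)|
        = |(((Finset.range (2 ^ k)).filter P).card : ℝ) - 2 ^ k * (b - a)| := by ring_nf
      _ ≤ 1 := hgrid
      _ ≤ 2 * ((Nat.log 2 N : ℝ) + 1) := hrhs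
  · -- M ≥ 1 : use the induction hypothesis
    have hMN : M < N := by omega
    have hIH := ih M hMN a' b' (le_max_right _ _)
      (max_le_max (by linarith) le_rfl)
      (max_le (by linarith) (by norm_num))
    have hlogM : Nat.log 2 M < k :=
      (Nat.log_lt_iff_lt_pow (by norm_num) hM0.ne').2 hMlt
    have hlogMr : (Nat.log 2 M : ℝ) + 1 ≤ (k : ℝ) := by
      have : Nat.log 2 M + 1 ≤ k := hlogM
      exact_mod_cast this
    have hlen : |(b' - a') - (b - a)| ≤ ε := by
      rw [ha', hb', abs_le]
      rcases le_or_gt 0 (a - ε) with h | h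
      · have hbe : 0 ≤ b - ε := by linarith
        rw [max_eq_left h, max_eq_left hbe]
        constructor <;> linarith
      · rw [max_eq_right h.le]
        rcases le_or_gt 0 (b - ε) with h2 | h2
        · rw [max_eq_left h2]
          constructor <;> linarith
        · rw [max_eq_right h2.le]
          constructor <;> linarith
    have hscale : |(M : ℝ) * (b' - a') - (M : ℝ) * (b - a)| ≤ 1 / 2 := by
      rw [← mul_sub, abs_mul, abs_of_nonneg (Nat.cast_nonneg M)]
      have hM2k : (M : ℝ) ≤ 2 ^ k := by
        exact_mod_cast hMlt.le
      calc (M : ℝ) * |(b' - a') - (b - a)| ≤ (2 : ℝ) ^ k * ε := by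
            apply mul_le_mul hM2k hlen (abs_nonneg _) (by positivity)
        _ = 1 / 2 := by
            rw [hε, pow_succ]
            field_simp
    have hexp : (((2 : ℝ) ^ k + (M : ℝ)) * (b - a)) = 2 ^ k * (b - a) + (M : ℝ) * (b - a) := by
      ring
    rw [hcast, hNr, hexp, abs_le]
    have e1 := abs_le.1 hgrid
    have e2 := abs_le.1 hIH
    have e3 := abs_le.1 hscale
    constructor <;> linarith [e1.1, e1.2, e2.1, e2.2, e3.1, e3.2, hlogMr]

end VdcAux

/-- The binary van der Corput sequence is uniformly distributed modulo 1. -/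
theorem vdc_two_uniformly_distributed :
    ∀ a b : ℝ, 0 ≤ a → a < b → b ≤ 1 →
      Tendsto (fun N : ℕ =>
          (((Finset.range N).filter (fun n => vdc 2 n ∈ Set.Ico a b)).card : ℝ) / N)
        atTop (nhds (b - a)) := by
  intro a b ha hab hb
  rw [tendsto_iff_dist_tendsto_zero]
  have hloglim : Tendsto (fun N : ℕ => Real.log N / N) atTop (nhds 0) := by
    have h1 : Tendsto (fun x : ℝ => Real.log x / x) atTop (nhds 0) := by
      have := Real.isLittleO_log_id_atTop.tendsto_div_nhds_zero
      simpa using this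
    exact h1.comp tendsto_natCast_atTop_atTop
  have hinv : Tendsto (fun N : ℕ => (1 : ℝ) / N) atTop (nhds 0) :=
    tendsto_one_div_atTop_nhds_zero_nat
  have hlog2 : (0 : ℝ) < Real.log 2 := Real.log_pos (by norm_num)
  have hg : Tendsto (fun N : ℕ => (2 / Real.log 2) * (Real.log N / N) + 2 * (1 / N))
      atTop (nhds 0) := by
    have := ((hloglim.const_mul (2 / Real.log 2)).add (hinv.const_mul 2))
    simpa using this
  apply squeeze_zero' (Eventually.of_forall fun N => dist_nonneg) ?_ hg
  filter_upwards [eventually_ge_atTop 1] with N hN1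
  have hN0 : (0 : ℝ) < N := by exact_mod_cast hN1
  have key := VdcAux.count_bound N a b ha hab.le hb
  rw [Real.dist_eq]
  have heq : (((Finset.range N).filter (fun n => vdc 2 n ∈ Set.Ico a b)).card : ℝ) / N - (b - a)
      = ((((Finset.range N).filter (fun n => vdc 2 n ∈ Set.Ico a b)).card : ℝ)
          - N * (b - a)) / N := by
    field_simp
  rw [heq, abs_div, abs_of_pos hN0]
  have hlogle : (Nat.log 2 N : ℝ) ≤ Real.log N / Real.log 2 := by
    have h1 : (2 : ℝ) ^ (Nat.log 2 N) ≤ (N : ℝ) := by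
      exact_mod_cast Nat.pow_log_le_self 2 (by omega : N ≠ 0)
    have h2 : Real.log ((2 : ℝ) ^ (Nat.log 2 N)) ≤ Real.log N :=
      Real.log_le_log (by positivity) h1
    rw [Real.log_pow] at h2
    rw [le_div_iff₀ hlog2]
    exact_mod_cast h2
  calc |(((Finset.range N).filter (fun n => vdc 2 n ∈ Set.Ico a b)).card : ℝ) - N * (b - a)| / N
      ≤ (2 * ((Nat.log 2 N : ℝ) + 1)) / N := by gcongr
    _ ≤ (2 * (Real.log N / Real.log 2) + 2) / N := by
        gcongr
        linarith
    _ = (2 / Real.log 2) * (Real.log N / N) + 2 * (1 / N) := by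
        field_simp
end

section
/- For every base b ≥ 2, every m ∈ ℕ, and every k ∈ {0,1,…,bᵐ−1}, among any bᵐ consecutive elements y_l, y_{l+1}, …, y_{l+bᵐ−1} of the van der Corput sequence in base b, exactly one belongs to the interval [k/bᵐ, (k+1)/bᵐ). -/
open scoped Classical

/-- Digit reversal: first `m` base-`b` digits of `r`, reversed, as an integer. -/
def rev (b m r : ℕ) : ℕ := ∑ j ∈ Finset.range m, (r / b ^ j % b) * b ^ (m - 1 - j)

lemma rev_succ (b m r : ℕ) : rev b (m + 1) r = (r % b) * b ^ m + rev b m (r / b) := by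
  unfold rev
  rw [Finset.sum_range_succ']
  simp only [pow_zero, Nat.div_one, Nat.add_sub_cancel]
  rw [add_comm]
  congr 1
  apply Finset.sum_congr rfl
  intro j hj
  have h1 : r / b ^ (j + 1) = r / b / b ^ j := by
    rw [Nat.div_div_eq_div_mul, ← pow_succ']
  rw [h1]
  congr 2
  omega

lemma rev_lt (b : ℕ) (hb : 1 ≤ b) (m : ℕ) : ∀ r, rev b m r < b ^ m := by
  induction m with
  | zero => intro r; simp [rev]
  | succ m ih =>
    intro r
    rw [rev_succ]
    have h1 : rev b m (r / b) < b ^ m := ih _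
    have h2 : r % b < b := Nat.mod_lt _ hb
    calc (r % b) * b ^ m + rev b m (r / b) < (r % b) * b ^ m + b ^ m := by omega
    _ = (r % b + 1) * b ^ m := by ring
    _ ≤ b * b ^ m := Nat.mul_le_mul_right _ (by omega)
    _ = b ^ (m + 1) := by ring

lemma rev_inj (b : ℕ) (hb : 1 ≤ b) (m : ℕ) :
    ∀ r s, r < b ^ m → s < b ^ m → rev b m r = rev b m s → r = s := by
  induction m with
  | zero => intro r s hr hs _; simp at hr hs; omega
  | succ m ih =>
    intro r s hr hs h
    rw [rev_succ, rev_succ] at h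
    have hu : rev b m (r / b) < b ^ m := rev_lt b hb m _
    have hv : rev b m (s / b) < b ^ m := rev_lt b hb m _
    have hmod : r % b = s % b := by
      have h2 := congrArg (· / b ^ m) h
      simp only [add_comm (_ * b ^ m)] at h2
      rwa [Nat.add_mul_div_right _ _ (pow_pos hb m),
        Nat.add_mul_div_right _ _ (pow_pos hb m),
        Nat.div_eq_of_lt hu, Nat.div_eq_of_lt hv, zero_add, zero_add] at h2
    rw [hmod] at h
    have hrev : rev b m (r / b) = rev b m (s / b) := by omega
    have hr' : r / b < b ^ m := by
      apply Nat.div_lt_of_lt_mul; rw [mul_comm, ← pow_succ]; exact hr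
    have hs' : s / b < b ^ m := by
      apply Nat.div_lt_of_lt_mul; rw [mul_comm, ← pow_succ]; exact hs
    have hdiv := ih _ _ hr' hs' hrev
    have e1 := Nat.div_add_mod r b
    have e2 := Nat.div_add_mod s b
    rw [hdiv, hmod] at e1
    omega

lemma vdc_eq_sum (b : ℕ) (hb : 2 ≤ b) (n N : ℕ) (hN : n + 1 ≤ N) :
    vdc b n = ∑ j ∈ Finset.range N, ((n / b ^ j % b : ℕ) : ℝ) / (b : ℝ) ^ (j + 1) := by
  unfold vdc
  apply Finset.sum_subset (Finset.range_subset_range.2 hN)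
  intro j hj hj'
  simp only [Finset.mem_range] at hj hj'
  have hnj : n < b ^ j := by
    calc n < 2 ^ n := Nat.lt_two_pow_self
    _ ≤ 2 ^ j := Nat.pow_le_pow_right (by omega) (by omega)
    _ ≤ b ^ j := Nat.pow_le_pow_left hb j
  rw [Nat.div_eq_of_lt hnj]
  simp

lemma vdc_zero (b : ℕ) : vdc b 0 = 0 := by simp [vdc]

lemma vdc_split (b : ℕ) (hb : 2 ≤ b) (m n : ℕ) :
    vdc b n = ((rev b m (n % b ^ m) : ℝ) + vdc b (n / b ^ m)) / (b : ℝ) ^ m := by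
  have hb0 : (0:ℝ) < (b:ℝ) := by positivity
  have hbm : (0:ℝ) < (b:ℝ) ^ m := by positivity
  set q := n / b ^ m with hq
  rw [vdc_eq_sum b hb n (m + (n + 1)) (by omega)]
  rw [Finset.sum_range_add]
  have h1 : ∑ j ∈ Finset.range m, ((n / b ^ j % b : ℕ) : ℝ) / (b : ℝ) ^ (j + 1)
      = (rev b m (n % b ^ m) : ℝ) / (b : ℝ) ^ m := by
    unfold rev
    push_cast
    rw [Finset.sum_div]
    apply Finset.sum_congr rfl
    intro j hj
    simp only [Finset.mem_range] at hj
    have hexp : b ^ j * (b * b ^ (m - 1 - j)) = b ^ m := by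
      rw [← pow_succ', ← pow_add]
      congr 1
      omega
    have hdig : n % b ^ m / b ^ j % b = n / b ^ j % b := by
      have hn2 : n = n % b ^ m + b ^ j * (b * b ^ (m - 1 - j) * (n / b ^ m)) := by
        rw [← mul_assoc, hexp, Nat.mod_add_div]
      conv_rhs => rw [hn2]
      rw [Nat.add_mul_div_left _ _ (pow_pos (by omega : 0 < b) j), mul_assoc,
        Nat.add_mul_mod_self_left]
    rw [hdig]
    rw [div_eq_div_iff (by positivity) (by positivity), mul_assoc, ← pow_add,
      show m - 1 - j + (j + 1) = m from by omega]
  have h2 : ∑ j ∈ Finset.range (n + 1), ((n / b ^ (m + j) % b : ℕ) : ℝ) / (b : ℝ) ^ (m + j + 1)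
      = vdc b q / (b : ℝ) ^ m := by
    rw [vdc_eq_sum b hb q (n + 1) (by have := Nat.div_le_self n (b ^ m); omega)]
    rw [Finset.sum_div]
    apply Finset.sum_congr rfl
    intro j hj
    have hdig : n / b ^ (m + j) = q / b ^ j := by
      rw [hq, Nat.div_div_eq_div_mul, ← pow_add]
    rw [hdig, div_div, ← pow_add]
    congr 2
    omega
  rw [h1, h2, ← add_div]

lemma vdc_nonneg (b n : ℕ) : 0 ≤ vdc b n := by
  apply Finset.sum_nonneg
  intro j _
  positivity

lemma vdc_lt_one (b : ℕ) (hb : 2 ≤ b) (n : ℕ) : vdc b n < 1 := by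
  have hn : n < b ^ (n + 1) := by
    calc n < 2 ^ (n + 1) := by have := @Nat.lt_two_pow_self n; have : (2:ℕ) ^ n ≤ 2 ^ (n+1) := Nat.pow_le_pow_right (by omega) (by omega); omega
    _ ≤ b ^ (n + 1) := Nat.pow_le_pow_left hb _
  have h := vdc_split b hb (n + 1) n
  rw [Nat.mod_eq_of_lt hn, Nat.div_eq_of_lt hn, vdc_zero, add_zero] at h
  rw [h]
  have hlt : rev b (n + 1) n < b ^ (n + 1) := rev_lt b (by omega) _ _
  have hbm : (0:ℝ) < (b:ℝ) ^ (n + 1) := by positivity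
  rw [div_lt_one hbm]
  exact_mod_cast hlt

lemma count_mod (B : ℕ) (hB : 0 < B) (Q : ℕ → Prop) [DecidablePred Q] :
    ∀ l, ((Finset.Ico l (l + B)).filter (fun n => Q (n % B))).card
      = ((Finset.range B).filter Q).card := by
  intro l
  induction l with
  | zero =>
    rw [Finset.range_eq_Ico]
    simp only [zero_add]
    apply Finset.card_nbij id
    · intro x hx
      simp only [Finset.mem_coe, Finset.mem_filter, Finset.mem_Ico] at hx ⊢
      rw [Nat.mod_eq_of_lt hx.1.2] at hx
      exact ⟨hx.1, hx.2⟩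
    · intro x hx y hy h; exact h
    · intro x hx
      simp only [Finset.coe_filter, Finset.mem_Ico, Set.mem_setOf_eq, Set.mem_image] at hx ⊢
      exact ⟨x, ⟨hx.1, by rw [Nat.mod_eq_of_lt hx.1.2]; exact hx.2⟩, rfl⟩
  | succ l ih =>
    have h1 : Finset.Ico l (l + B + 1) = insert l (Finset.Ico (l + 1) (l + B + 1)) := by
      ext x; simp only [Finset.mem_Ico, Finset.mem_insert]; omega
    have h2 : Finset.Ico l (l + B + 1) = insert (l + B) (Finset.Ico l (l + B)) := by
      ext x; simp only [Finset.mem_Ico, Finset.mem_insert]; omega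
    have c1 : ((Finset.Ico l (l + B + 1)).filter (fun n => Q (n % B))).card
        = (if Q (l % B) then 1 else 0)
          + ((Finset.Ico (l + 1) (l + B + 1)).filter (fun n => Q (n % B))).card := by
      rw [h1, Finset.filter_insert]
      split
      · rw [Finset.card_insert_of_notMem (by simp [Finset.mem_filter, Finset.mem_Ico])]
        omega
      · omega
    have c2 : ((Finset.Ico l (l + B + 1)).filter (fun n => Q (n % B))).card
        = (if Q ((l + B) % B) then 1 else 0)
          + ((Finset.Ico l (l + B)).filter (fun n => Q (n % B))).card := by
      rw [h2, Finset.filter_insert]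
      split
      · rw [Finset.card_insert_of_notMem (by simp [Finset.mem_filter, Finset.mem_Ico])]
        omega
      · omega
    rw [Nat.add_mod_right] at c2
    have : l + 1 + B = l + B + 1 := by omega
    rw [this]
    omega

lemma count_rev (b : ℕ) (hb : 2 ≤ b) (m k : ℕ) (hk : k < b ^ m) :
    ((Finset.range (b ^ m)).filter (fun r => rev b m r = k)).card = 1 := by
  have hmaps : ∀ r ∈ Finset.range (b ^ m), rev b m r ∈ Finset.range (b ^ m) := by
    intro r _; exact Finset.mem_range.2 (rev_lt b (by omega) m r)
  have hinj : Set.InjOn (rev b m) (Finset.range (b ^ m)) := by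
    intro r hr s hs h
    exact rev_inj b (by omega) m r s (Finset.mem_range.1 hr) (Finset.mem_range.1 hs) h
  have himg : (Finset.range (b ^ m)).image (rev b m) = Finset.range (b ^ m) := by
    apply Finset.eq_of_subset_of_card_le
    · intro x hx
      obtain ⟨r, hr, rfl⟩ := Finset.mem_image.1 hx
      exact hmaps r hr
    · rw [Finset.card_image_of_injOn hinj]
  obtain ⟨r, hr, hrk⟩ := Finset.mem_image.1 (himg ▸ Finset.mem_range.2 hk)
  rw [Finset.card_eq_one]
  refine ⟨r, ?_⟩
  ext x
  simp only [Finset.mem_filter, Finset.mem_range, Finset.mem_singleton]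
  constructor
  · rintro ⟨hx, hxk⟩
    exact rev_inj b (by omega) m x r hx (Finset.mem_range.1 hr) (by rw [hxk, hrk])
  · rintro rfl
    exact ⟨Finset.mem_range.1 hr, hrk⟩

lemma mem_iff (b : ℕ) (hb : 2 ≤ b) (m k n : ℕ) (hk : k < b ^ m) :
    (vdc b n ∈ Set.Ico ((k : ℝ) / (b : ℝ) ^ m) (((k : ℝ) + 1) / (b : ℝ) ^ m))
      ↔ rev b m (n % b ^ m) = k := by
  have hbm : (0:ℝ) < (b : ℝ) ^ m := by positivity
  rw [vdc_split b hb m n]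
  set R := rev b m (n % b ^ m) with hR
  set t := vdc b (n / b ^ m) with ht
  have ht0 : 0 ≤ t := vdc_nonneg b _
  have ht1 : t < 1 := vdc_lt_one b hb _
  simp only [Set.mem_Ico]
  rw [div_le_div_iff_of_pos_right hbm, div_lt_div_iff_of_pos_right hbm]
  constructor
  · rintro ⟨h1, h2⟩
    have hR1 : (R:ℝ) < (k:ℝ) + 1 := by linarith
    have hR2 : (k:ℝ) < (R:ℝ) + 1 := by linarith
    have := Nat.cast_lt (α := ℝ) (m := R) (n := k + 1)
    have := Nat.cast_lt (α := ℝ) (m := k) (n := R + 1)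
    push_cast at *
    have : R < k + 1 := by exact_mod_cast hR1
    have : k < R + 1 := by exact_mod_cast hR2
    omega
  · rintro rfl
    constructor <;> push_cast <;> linarith


/-- Among any `b ^ m` consecutive elements of the van der Corput sequence in base `b`,
exactly one belongs to the elementary interval `[k / b ^ m, (k + 1) / b ^ m)`. -/
theorem vdc_elementary_interval (b : ℕ) (hb : 2 ≤ b) (m k l : ℕ) (hk : k < b ^ m) :
    ((Finset.Ico l (l + b ^ m)).filter
      (fun n => vdc b n ∈
        Set.Ico ((k : ℝ) / (b : ℝ) ^ m) (((k : ℝ) + 1) / (b : ℝ) ^ m))).card = 1 := by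
  have hfc : ((Finset.Ico l (l + b ^ m)).filter
      (fun n => vdc b n ∈
        Set.Ico ((k : ℝ) / (b : ℝ) ^ m) (((k : ℝ) + 1) / (b : ℝ) ^ m)))
      = ((Finset.Ico l (l + b ^ m)).filter (fun n => rev b m (n % b ^ m) = k)) := by
    apply Finset.filter_congr
    intro n _
    exact mem_iff b hb m k n hk
  rw [hfc, count_mod (b ^ m) (pow_pos (by omega : 0 < b) m) (fun r => rev b m r = k) l,
    count_rev b hb m k hk]
end

section
/- For every N ≥ 2, the star discrepancy of the binary van der Corput sequence satisfies N·D*_N(Y₂) ≤ (log N)/(log 2) + 1. -/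
open scoped Classical
open Filter

/-- The star discrepancy of the first `N` terms of a sequence in `[0,1)`. -/
noncomputable def dstar (x : ℕ → ℝ) (N : ℕ) : ℝ :=
  ⨆ t : Set.Icc (0 : ℝ) 1,
    |(((Finset.range N).filter (fun n => x n ∈ Set.Ico (0 : ℝ) (t : ℝ))).card : ℝ) / N - (t : ℝ)|

noncomputable def vdck (k r : ℕ) : ℝ :=
  ∑ j ∈ Finset.range k, ((r / 2 ^ j % 2 : ℕ) : ℝ) / (2 : ℝ) ^ (j + 1)

lemma vdck_nonneg (k r : ℕ) : 0 ≤ vdck k r := by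
  unfold vdck; positivity

lemma geom_half (k : ℕ) : ∑ j ∈ Finset.range k, (1 : ℝ) / 2 ^ (j + 1) = 1 - 1 / 2 ^ k := by
  induction k with
  | zero => simp
  | succ k ih => rw [Finset.sum_range_succ, ih]; field_simp; ring

lemma vdck_le (k r : ℕ) : vdck k r ≤ 1 - 1 / 2 ^ k := by
  have h1 : vdck k r ≤ ∑ j ∈ Finset.range k, (1 : ℝ) / 2 ^ (j + 1) := by
    apply Finset.sum_le_sum
    intro j _
    apply div_le_div_of_nonneg_right ?_ (by positivity) |>.trans_eq rfl
    · exact_mod_cast Nat.le_of_lt_succ (Nat.mod_lt _ (by norm_num))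
  rw [geom_half] at h1; exact h1

lemma vdck_succ (k r : ℕ) :
    vdck (k + 1) r = ((r % 2 : ℕ) : ℝ) / 2 + vdck k (r / 2) / 2 := by
  unfold vdck
  rw [Finset.sum_range_succ']
  simp only [pow_zero, Nat.div_one, zero_add, pow_one]
  rw [add_comm]
  congr 1
  rw [Finset.sum_div]
  apply Finset.sum_congr rfl
  intro j _
  rw [Nat.div_div_eq_div_mul, show (2:ℕ) * 2 ^ j = 2 ^ (j+1) by ring, div_div]
  ring_nf

lemma sum_range_two_mul (f : ℕ → ℕ) (n : ℕ) :
    ∑ j ∈ Finset.range (2 * n), f j = ∑ i ∈ Finset.range n, (f (2 * i) + f (2 * i + 1)) := by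
  induction n with
  | zero => simp
  | succ n ih =>
    rw [show 2 * (n + 1) = (2 * n + 1) + 1 by ring, Finset.sum_range_succ,
      Finset.sum_range_succ, ih, Finset.sum_range_succ, add_assoc]

lemma card_filter_two_mul (p : ℕ → Prop) (n : ℕ) :
    ((Finset.range (2 * n)).filter p).card =
      ((Finset.range n).filter (fun r => p (2 * r))).card +
      ((Finset.range n).filter (fun r => p (2 * r + 1))).card := by
  rw [Finset.card_filter, Finset.card_filter, Finset.card_filter, sum_range_two_mul,
    Finset.sum_add_distrib]

lemma count_vdck (k : ℕ) : ∀ (c t : ℝ), 0 ≤ c → c < 1 / 2 ^ k → 0 ≤ t → t ≤ 1 →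
    |(((Finset.range (2 ^ k)).filter (fun r => vdck k r + c < t)).card : ℝ) - 2 ^ k * t| ≤ 1 := by
  induction k with
  | zero =>
    intro c t hc0 hc1 ht0 ht1
    simp only [pow_zero, Finset.range_one, one_mul]
    by_cases h : vdck 0 0 + c < t
    · rw [Finset.filter_singleton, if_pos h]
      simp only [Finset.card_singleton, Nat.cast_one]
      rw [abs_le]; constructor <;> linarith
    · rw [Finset.filter_singleton, if_neg h]
      simp only [Finset.card_empty, Nat.cast_zero, zero_sub, abs_neg, abs_of_nonneg ht0]
      linarith
  | succ k ih =>
    intro c t hc0 hc1 ht0 ht1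
    have h2k : (0:ℝ) < 2 ^ k := by positivity
    rw [show 2 ^ (k + 1) = 2 * 2 ^ k from by ring, card_filter_two_mul]
    have heven : ∀ r : ℕ, (vdck (k+1) (2*r) + c < t) ↔ (vdck k r + 2*c < 2*t) := by
      intro r
      rw [vdck_succ]
      simp only [Nat.mul_mod_right, Nat.cast_zero, zero_div, zero_add,
        Nat.mul_div_cancel_left _ (by norm_num : 0 < 2)]
      constructor <;> intro <;> linarith
    have hodd : ∀ r : ℕ, (vdck (k+1) (2*r+1) + c < t) ↔ (vdck k r + 2*c < 2*t - 1) := by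
      intro r
      rw [vdck_succ]
      have h1 : (2*r+1) % 2 = 1 := by omega
      have h2 : (2*r+1) / 2 = r := by omega
      rw [h1, h2]
      push_cast
      constructor <;> intro <;> linarith
    have hc1' : 2 * c < 1 / 2 ^ k := by
      rw [lt_div_iff₀ h2k]
      rw [show ((2:ℝ)) ^ (k+1) = 2 * 2 ^ k from by ring,
        lt_div_iff₀ (by positivity : (0:ℝ) < 2 * 2 ^ k)] at hc1
      linarith
    by_cases ht : t ≤ 1 / 2
    · have hB : ((Finset.range (2^k)).filter (fun r => vdck (k+1) (2*r+1) + c < t)).card = 0 := by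
        rw [Finset.card_eq_zero, Finset.filter_eq_empty_iff]
        intro r _
        rw [hodd]
        have := vdck_nonneg k r
        intro h; linarith
      have hA := ih (2*c) (2*t) (by linarith) hc1' (by linarith) (by linarith)
      have hAeq : ((Finset.range (2^k)).filter (fun r => vdck (k+1) (2*r) + c < t)).card =
          ((Finset.range (2^k)).filter (fun r => vdck k r + 2*c < 2*t)).card := by
        congr 1
        exact Finset.filter_congr (fun r _ => by rw [heven r])
      rw [hB, hAeq]
      push_cast
      have heq : (((Finset.range (2^k)).filter (fun r => vdck k r + 2*c < 2*t)).card : ℝ) + 0 - 2^(k+1)*t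
          = (((Finset.range (2^k)).filter (fun r => vdck k r + 2*c < 2*t)).card : ℝ) - 2^k*(2*t) := by
        rw [pow_succ]; ring
      rw [heq]
      exact hA
    · push_neg at ht
      have hA : ((Finset.range (2^k)).filter (fun r => vdck (k+1) (2*r) + c < t)).card = 2^k := by
        rw [Finset.filter_true_of_mem, Finset.card_range]
        intro r _
        rw [heven]
        have h1 := vdck_le k r
        have : (0:ℝ) < 1/2^k := by positivity
        linarith
      have hB := ih (2*c) (2*t - 1) (by linarith) hc1' (by linarith) (by linarith)
      have hBeq : ((Finset.range (2^k)).filter (fun r => vdck (k+1) (2*r+1) + c < t)).card =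
          ((Finset.range (2^k)).filter (fun r => vdck k r + 2*c < 2*t - 1)).card := by
        congr 1
        exact Finset.filter_congr (fun r _ => by rw [hodd r])
      rw [hA, hBeq]
      push_cast
      have heq : (2:ℝ)^k + (((Finset.range (2^k)).filter (fun r => vdck k r + 2*c < 2*t-1)).card : ℝ) - 2^(k+1)*t
          = (((Finset.range (2^k)).filter (fun r => vdck k r + 2*c < 2*t-1)).card : ℝ) - 2^k*(2*t-1) := by
        rw [pow_succ]; ring
      rw [heq]
      exact hB

lemma vdck_stable {n L L' : ℕ} (h : n < 2 ^ L) (hLL : L ≤ L') : vdck L' n = vdck L n := by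
  unfold vdck
  rw [← Finset.sum_subset (Finset.range_subset_range.2 hLL)]
  intro j hj hj'
  simp only [Finset.mem_range, not_lt] at hj'
  have : n / 2 ^ j = 0 := Nat.div_eq_of_lt (h.trans_le (Nat.pow_le_pow_right (by norm_num) hj'))
  rw [this]
  simp

lemma vdc_two_eq_vdck (L n : ℕ) (h : n < 2 ^ L) : vdc 2 n = vdck L n := by
  have h1 : vdc 2 n = vdck (n + 1) n := by
    unfold vdc vdck
    norm_num
  have h2 : n < 2 ^ (n + 1) := (Nat.lt_two_pow_self (n := n)).trans (Nat.pow_lt_pow_succ (by norm_num))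
  rw [h1, ← vdck_stable h2 (Nat.le_max_right L (n+1)), vdck_stable h (Nat.le_max_left L (n+1))]

lemma vdc_two_nonneg (n : ℕ) : 0 ≤ vdc 2 n := by
  rw [vdc_two_eq_vdck (n+1) n ((Nat.lt_two_pow_self (n := n)).trans (Nat.pow_lt_pow_succ (by norm_num)))]
  exact vdck_nonneg _ _

lemma vdc_two_lt_one (n : ℕ) : vdc 2 n < 1 := by
  rw [vdc_two_eq_vdck (n+1) n ((Nat.lt_two_pow_self (n := n)).trans (Nat.pow_lt_pow_succ (by norm_num)))]
  have : (0:ℝ) < 1 / 2 ^ (n+1) := by positivity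
  linarith [vdck_le (n+1) n]

lemma vdc_add (a k r : ℕ) (hd : 2 ^ k ∣ a) (hr : r < 2 ^ k) :
    vdc 2 (a + r) = vdck k r + vdc 2 (a / 2 ^ k) / 2 ^ k := by
  obtain ⟨c, hc⟩ := hd
  have hpos : (0:ℕ) < 2 ^ k := Nat.two_pow_pos k
  have hdiv : a / 2 ^ k = c := by rw [hc]; exact Nat.mul_div_cancel_left c hpos
  subst hc
  rw [hdiv]
  set L := k + (c + 1) with hL
  have hcL : c < 2 ^ (c + 1) := (Nat.lt_two_pow_self (n := c)).trans (Nat.pow_lt_pow_succ (by norm_num))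
  have hnL : 2 ^ k * c + r < 2 ^ L := by
    calc 2 ^ k * c + r < 2 ^ k * c + 2 ^ k := by omega
      _ = 2 ^ k * (c + 1) := by ring
      _ ≤ 2 ^ k * 2 ^ (c + 1) := Nat.mul_le_mul_left _ (by omega)
      _ = 2 ^ L := by rw [hL, pow_add]; ring
  rw [vdc_two_eq_vdck L _ hnL, vdc_two_eq_vdck (c + 1) c hcL]
  unfold vdck
  rw [Finset.range_eq_Ico, ← Finset.sum_Ico_consecutive _ (Nat.zero_le k) (by omega : k ≤ L),
    ← Finset.range_eq_Ico]
  congr 1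
  · apply Finset.sum_congr rfl
    intro j hj
    rw [Finset.mem_range] at hj
    congr 2
    have h1 : 2 ^ k * c = 2 ^ j * (2 * (2 ^ (k - j - 1) * c)) := by
      rw [← mul_assoc, ← mul_assoc]
      have : 2 ^ j * 2 * 2 ^ (k - j - 1) = 2 ^ k := by
        rw [mul_assoc, ← pow_succ', ← pow_add]
        congr 1
        omega
      rw [this]
    rw [h1, Nat.mul_add_div (Nat.two_pow_pos j), Nat.add_comm,
      Nat.add_mul_mod_self_left]
  · rw [Finset.sum_Ico_eq_sum_range]
    have hLk : L - k = c + 1 := by omega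
    rw [hLk, Finset.sum_div]
    apply Finset.sum_congr rfl
    intro i hi
    have h1 : (2 ^ k * c + r) / 2 ^ (k + i) = c / 2 ^ i := by
      rw [pow_add, ← Nat.div_div_eq_div_mul, Nat.mul_add_div hpos, Nat.div_eq_of_lt hr,
        Nat.add_zero]
    rw [h1, div_div]
    congr 1
    rw [← pow_add]
    congr 1
    omega

lemma block_count (a k : ℕ) (hd : 2 ^ k ∣ a) (t : ℝ) (ht0 : 0 ≤ t) (ht1 : t ≤ 1) :
    |(((Finset.range (2 ^ k)).filter (fun r => vdc 2 (a + r) < t)).card : ℝ) - 2 ^ k * t| ≤ 1 := by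
  set c : ℝ := vdc 2 (a / 2 ^ k) / 2 ^ k with hc
  have h2k : (0:ℝ) < 2 ^ k := by positivity
  have heq : ((Finset.range (2 ^ k)).filter (fun r => vdc 2 (a + r) < t)) =
      ((Finset.range (2 ^ k)).filter (fun r => vdck k r + c < t)) := by
    apply Finset.filter_congr
    intro r hr
    rw [Finset.mem_range] at hr
    rw [vdc_add a k r hd hr]
  rw [heq]
  apply count_vdck k c t
  · exact div_nonneg (vdc_two_nonneg _) (le_of_lt h2k)
  · rw [div_lt_div_iff₀ h2k h2k, one_mul]
    have := vdc_two_lt_one (a / 2 ^ k)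
    nlinarith
  · exact ht0
  · exact ht1

lemma main_count (M : ℕ) : ∀ (a : ℕ), 2 ^ Nat.size M ∣ a → ∀ t : ℝ, 0 ≤ t → t ≤ 1 →
    |(((Finset.range M).filter (fun m => vdc 2 (a + m) < t)).card : ℝ) - M * t| ≤ Nat.size M := by
  induction M using Nat.strong_induction_on with
  | _ M ih =>
  intro a ha t ht0 ht1
  rcases Nat.eq_zero_or_pos M with hM | hM
  · subst hM; simp [abs_of_nonneg]
  · set k := Nat.size M - 1 with hk
    have hsz : Nat.size M = k + 1 := by
      have := Nat.size_pos.mpr hM; omega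
    have h1 : 2 ^ k ≤ M := Nat.lt_size.mp (by omega)
    have h2 : M < 2 ^ (k + 1) := by rw [← hsz]; exact Nat.lt_size_self M
    set M' := M - 2 ^ k with hM'
    have hMeq : M = 2 ^ k + M' := by omega
    have hM'lt : M' < 2 ^ k := by
      have : 2 ^ (k+1) = 2 ^ k + 2 ^ k := by ring
      omega
    have hszM' : Nat.size M' ≤ k := Nat.size_le.mpr hM'lt
    have hsplit : (((Finset.range M).filter (fun m => vdc 2 (a + m) < t)).card : ℕ) =
        ((Finset.range (2 ^ k)).filter (fun m => vdc 2 (a + m) < t)).card +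
        ((Finset.range M').filter (fun m => vdc 2 ((a + 2 ^ k) + m) < t)).card := by
      rw [Finset.card_filter, Finset.card_filter, Finset.card_filter]
      rw [Finset.range_eq_Ico, ← Finset.sum_Ico_consecutive _ (Nat.zero_le (2^k)) (by omega : 2^k ≤ M),
        ← Finset.range_eq_Ico]
      congr 1
      rw [Finset.sum_Ico_eq_sum_range]
      have : M - 2 ^ k = M' := rfl
      rw [this]
      apply Finset.sum_congr rfl
      intro i _
      rw [← Nat.add_assoc]
    have hc1 := block_count a k (dvd_trans (pow_dvd_pow 2 (by omega : k ≤ Nat.size M)) ha) t ht0 ht1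
    have hc2 := ih M' (by omega) (a + 2 ^ k)
      (dvd_add (dvd_trans (pow_dvd_pow 2 (hszM'.trans (by omega : k ≤ Nat.size M))) ha)
        (pow_dvd_pow 2 hszM')) t ht0 ht1
    have hcast : (((Finset.range M).filter (fun m => vdc 2 (a + m) < t)).card : ℝ) =
        (((Finset.range (2 ^ k)).filter (fun m => vdc 2 (a + m) < t)).card : ℝ) +
        (((Finset.range M').filter (fun m => vdc 2 ((a + 2 ^ k) + m) < t)).card : ℝ) := by
      exact_mod_cast congrArg (Nat.cast : ℕ → ℝ) hsplit
    rw [hcast, hsz, hMeq]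
    push_cast
    calc |(((Finset.range (2 ^ k)).filter (fun m => vdc 2 (a + m) < t)).card : ℝ) +
          (((Finset.range M').filter (fun m => vdc 2 ((a + 2 ^ k) + m) < t)).card : ℝ) -
          ((2:ℝ) ^ k + M') * t|
        = |((((Finset.range (2 ^ k)).filter (fun m => vdc 2 (a + m) < t)).card : ℝ) - 2 ^ k * t) +
          ((((Finset.range M').filter (fun m => vdc 2 ((a + 2 ^ k) + m) < t)).card : ℝ) - M' * t)| := by
          congr 1
          ring
      _ ≤ |(((Finset.range (2 ^ k)).filter (fun m => vdc 2 (a + m) < t)).card : ℝ) - 2 ^ k * t| +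
          |(((Finset.range M').filter (fun m => vdc 2 ((a + 2 ^ k) + m) < t)).card : ℝ) - M' * t| :=
          abs_add_le _ _
      _ ≤ 1 + Nat.size M' := by linarith
      _ ≤ (k : ℝ) + 1 := by
          have : (Nat.size M' : ℝ) ≤ k := by exact_mod_cast hszM'
          linarith

/-- Van der Corput's 1935 estimate: `N D*_N(Y₂) ≤ log N / log 2 + 1` for all `N ≥ 2`. -/
theorem vdc_star_discrepancy_bound (N : ℕ) (hN : 2 ≤ N) :
    (N : ℝ) * dstar (vdc 2) N ≤ Real.log N / Real.log 2 + 1 := by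
  have hNpos : (0:ℝ) < N := by exact_mod_cast Nat.lt_of_lt_of_le (by norm_num) hN
  set B : ℝ := Real.log N / Real.log 2 + 1 with hB
  have hlog2 : (0:ℝ) < Real.log 2 := Real.log_pos (by norm_num)
  have hsizeB : (Nat.size N : ℝ) ≤ B := by
    have hNp : 0 < N := by omega
    have hs1 : 1 ≤ Nat.size N := Nat.size_pos.mpr hNp
    have h2s : (2:ℕ) ^ (Nat.size N - 1) ≤ N := Nat.lt_size.mp (by omega)
    have hlogle : ((Nat.size N - 1 : ℕ) : ℝ) * Real.log 2 ≤ Real.log N := by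
      have h1 : ((2:ℝ)) ^ (Nat.size N - 1) ≤ (N:ℝ) := by exact_mod_cast h2s
      calc ((Nat.size N - 1 : ℕ) : ℝ) * Real.log 2 = Real.log ((2:ℝ) ^ (Nat.size N - 1)) := by
            rw [Real.log_pow]
        _ ≤ Real.log N := Real.log_le_log (by positivity) h1
    have h3 : ((Nat.size N - 1 : ℕ) : ℝ) ≤ Real.log N / Real.log 2 := by
      rw [le_div_iff₀ hlog2]; exact hlogle
    have h4 : (Nat.size N : ℝ) = ((Nat.size N - 1 : ℕ) : ℝ) + 1 := by
      have : Nat.size N = (Nat.size N - 1) + 1 := by omega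
      exact_mod_cast congrArg (Nat.cast : ℕ → ℝ) this
    rw [h4, hB]
    linarith
  have hBpos : 0 ≤ B := le_trans (by positivity) hsizeB
  have hle : dstar (vdc 2) N ≤ B / N := by
    haveI : Nonempty (Set.Icc (0:ℝ) 1) := ⟨⟨0, by norm_num⟩⟩
    apply ciSup_le
    intro t
    obtain ⟨t, ht0, ht1⟩ := t
    simp only
    have heqf : ((Finset.range N).filter (fun n => vdc 2 n ∈ Set.Ico (0:ℝ) t)) =
        ((Finset.range N).filter (fun m => vdc 2 (0 + m) < t)) := by
      apply Finset.filter_congr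
      intro n _
      simp only [Set.mem_Ico, zero_add]
      exact ⟨fun h => h.2, fun h => ⟨vdc_two_nonneg n, h⟩⟩
    have hmain := main_count N 0 (dvd_zero _) t ht0 ht1
    have habs : |(((Finset.range N).filter (fun n => vdc 2 n ∈ Set.Ico (0:ℝ) t)).card : ℝ) / N - t| =
        |(((Finset.range N).filter (fun m => vdc 2 (0 + m) < t)).card : ℝ) - N * t| / N := by
      rw [heqf]
      rw [show (((Finset.range N).filter (fun m => vdc 2 (0 + m) < t)).card : ℝ) / N - t =
          ((((Finset.range N).filter (fun m => vdc 2 (0 + m) < t)).card : ℝ) - N * t) / N from by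
        field_simp]
      rw [abs_div, abs_of_pos hNpos]
    rw [habs]
    have hfin : |(((Finset.range N).filter (fun m => vdc 2 (0 + m) < t)).card : ℝ) - N * t| ≤ B :=
      hmain.trans hsizeB
    gcongr
  calc (N : ℝ) * dstar (vdc 2) N ≤ N * (B / N) := by
        exact mul_le_mul_of_nonneg_left hle (le_of_lt hNpos)
    _ = B := by field_simp
end

section
/- For every N ∈ ℕ, the star discrepancy of the binary van der Corput sequence satisfies N·D*_N(Y₂) = Σ_{r=1}^∞ ‖N/2^r‖, where ‖x‖ denotes the distance from x to the nearest integer. Moreover, for 1 ≤ N ≤ 2^m this equals Σ_{r=1}^m ‖N/2^r‖ + N/2^m. -/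
open scoped Classical
open Filter

/-- Distance to the nearest integer. -/
noncomputable def nint (x : ℝ) : ℝ := |x - round x|

namespace VdC
open Finset


/-- reversal of the first `m` binary digits of `n`. -/
def bitrev : ℕ → ℕ → ℕ
  | 0, _ => 0
  | m+1, n => n % 2 * 2^m + bitrev m (n / 2)

lemma bitrev_lt (m : ℕ) : ∀ n, bitrev m n < 2^m := by
  induction m with
  | zero => intro n; simp [bitrev]
  | succ m ih =>
    intro n
    have h1 := ih (n / 2)
    have h2 : n % 2 < 2 := Nat.mod_lt _ (by norm_num)
    have : 2^(m+1) = 2 * 2^m := by ring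
    simp only [bitrev]
    nlinarith [h1, h2]

lemma bitrev_even (m k : ℕ) : bitrev (m+1) (2*k) = bitrev m k := by
  simp [bitrev, Nat.mul_div_cancel_left, Nat.mul_mod_right]

lemma bitrev_odd (m k : ℕ) : bitrev (m+1) (2*k+1) = 2^m + bitrev m k := by
  have h1 : (2*k+1) % 2 = 1 := by omega
  have h2 : (2*k+1) / 2 = k := by omega
  simp [bitrev, h1, h2]

/-- generic even/odd split of a sum over `range N` -/
lemma sum_range_even_odd (f : ℕ → ℕ) (N : ℕ) :
    ∑ n ∈ range N, f n
      = (∑ k ∈ range ((N+1)/2), f (2*k)) + ∑ k ∈ range (N/2), f (2*k+1) := by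
  induction N with
  | zero => simp
  | succ N ih =>
    rcases Nat.even_or_odd' N with ⟨k, hk | hk⟩
    · have e1 : (N+1+1)/2 = (N+1)/2 + 1 := by omega
      have e2 : (N+1)/2 = k := by omega
      have e3 : (N+1)/2 = N/2 := by omega
      rw [sum_range_succ, ih, e1, e3, sum_range_succ]
      have h4 : 2 * (N/2) = N := by omega
      rw [h4]; ring
    · have e1 : (N+1+1)/2 = (N+1)/2 := by omega
      have e2 : (N+1)/2 = N/2 + 1 := by omega
      rw [sum_range_succ, ih, e1, e2, sum_range_succ, sum_range_succ]
      have h4 : 2 * (N/2) + 1 = N := by omega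
      rw [h4]; ring

/-- number of `n < N` with `bitrev m n < j`. -/
def cnt (m N j : ℕ) : ℕ := ((range N).filter (fun n => bitrev m n < j)).card

lemma cnt_eq_sum (m N j : ℕ) :
    cnt m N j = ∑ n ∈ range N, (if bitrev m n < j then 1 else 0) := by
  rw [cnt, Finset.card_filter]

lemma cnt_zero (m N : ℕ) : cnt m N 0 = 0 := by simp [cnt]

lemma cnt_left (m N j : ℕ) (hj : j ≤ 2^m) :
    cnt (m+1) N j = cnt m ((N+1)/2) j := by
  rw [cnt_eq_sum, sum_range_even_odd, cnt_eq_sum]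
  have h1 : ∀ k, (if bitrev (m+1) (2*k) < j then (1:ℕ) else 0)
      = (if bitrev m k < j then 1 else 0) := by
    intro k; rw [bitrev_even]
  have h2 : ∀ k ∈ range (N/2), (if bitrev (m+1) (2*k+1) < j then (1:ℕ) else 0) = 0 := by
    intro k _; rw [bitrev_odd, if_neg (by omega)]
  rw [Finset.sum_congr rfl h2, Finset.sum_congr rfl (fun k _ => h1 k)]
  simp

lemma cnt_right (m N i : ℕ) :
    cnt (m+1) N (2^m + i) = (N+1)/2 + cnt m (N/2) i := by
  rw [cnt_eq_sum, sum_range_even_odd, cnt_eq_sum]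
  have h1 : ∀ k ∈ range ((N+1)/2),
      (if bitrev (m+1) (2*k) < 2^m + i then (1:ℕ) else 0) = 1 := by
    intro k _; rw [bitrev_even, if_pos (by have := bitrev_lt m k; omega)]
  have h2 : ∀ k, (if bitrev (m+1) (2*k+1) < 2^m + i then (1:ℕ) else 0)
      = (if bitrev m k < i then 1 else 0) := by
    intro k; rw [bitrev_odd]
    by_cases h : bitrev m k < i
    · rw [if_pos (by omega), if_pos h]
    · rw [if_neg (by omega), if_neg h]
  rw [Finset.sum_congr rfl h1, Finset.sum_congr rfl (fun k _ => h2 k)]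
  simp

/-- integer local discrepancy `2^m * A(N, j/2^m) - N*j`. -/
def gZ (m N j : ℕ) : ℤ := 2^m * cnt m N j - N * j

lemma gZ_zero (m N : ℕ) : gZ m N 0 = 0 := by simp [gZ, cnt_zero]

lemma gZ_left_even (m M j : ℕ) (hj : j ≤ 2^m) :
    gZ (m+1) (2*M) j = 2 * gZ m M j := by
  have h : (2*M+1)/2 = M := by omega
  unfold gZ
  rw [cnt_left m (2*M) j hj, h]
  push_cast [pow_succ]
  ring

lemma gZ_right_even (m M i : ℕ) :
    gZ (m+1) (2*M) (2^m + i) = 2 * gZ m M i := by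
  have h1 : (2*M+1)/2 = M := by omega
  have h2 : (2*M)/2 = M := by omega
  unfold gZ
  rw [cnt_right m (2*M) i, h1, h2]
  push_cast [pow_succ]
  ring

lemma gZ_left_odd (m M j : ℕ) (hj : j ≤ 2^m) :
    gZ (m+1) (2*M+1) j = 2 * gZ m (M+1) j + j := by
  have h : (2*M+1+1)/2 = M+1 := by omega
  unfold gZ
  rw [cnt_left m (2*M+1) j hj, h]
  push_cast [pow_succ]
  ring

lemma gZ_right_odd (m M i : ℕ) :
    gZ (m+1) (2*M+1) (2^m + i) = 2 * gZ m M i + 2^m - i := by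
  have h1 : (2*M+1+1)/2 = M+1 := by omega
  have h2 : (2*M+1)/2 = M := by omega
  unfold gZ
  rw [cnt_right m (2*M+1) i, h1, h2]
  push_cast [pow_succ]
  ring



/-- `μ_{r+1}(N) = min(N mod 2^{r+1}, 2^{r+1} - N mod 2^{r+1})`. -/
def mu (r N : ℕ) : ℕ := min (N % 2^(r+1)) (2^(r+1) - N % 2^(r+1))

/-- `2^m ∑_{r=1}^m ‖N/2^r‖`. -/
def Fn (m N : ℕ) : ℕ := ∑ r ∈ range m, 2^(m-1-r) * mu r N

lemma mu_even (r M : ℕ) : mu (r+1) (2*M) = 2 * mu r M := by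
  have h1 : (2*M) % 2^(r+2) = 2 * (M % 2^(r+1)) := by
    rw [pow_succ, mul_comm (2^(r+1)) 2, Nat.mul_mod_mul_left]
  have h2 : M % 2^(r+1) < 2^(r+1) := Nat.mod_lt _ (by positivity)
  have h3 : (2:ℕ)^(r+2) = 2 * 2^(r+1) := by ring
  unfold mu
  rw [h1, h3]
  omega

lemma mu_odd (r M : ℕ) : mu (r+1) (2*M+1) = mu r M + mu r (M+1) := by
  have hK : 2 ≤ 2^(r+1) := by
    have : (2:ℕ)^1 ≤ 2^(r+1) := Nat.pow_le_pow_right (by norm_num) (by omega)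
    simpa using this
  set K := 2^(r+1) with hKdef
  have h1 : (2*M+1) % (2*K) = 2 * (M % K) + 1 := by
    conv_lhs => rw [← Nat.div_add_mod M K]
    have : 2 * (K * (M/K) + M % K) + 1 = (2*K) * (M/K) + (2 * (M % K) + 1) := by ring
    rw [this, Nat.mul_add_mod]
    exact Nat.mod_eq_of_lt (by have := Nat.mod_lt M (show 0 < K by omega); omega)
  have hu : M % K < K := Nat.mod_lt M (by omega)
  have h2 : (M+1) % K = if M % K + 1 = K then 0 else M % K + 1 := by
    split_ifs with h
    · conv_lhs => rw [← Nat.div_add_mod M K]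
      have : K * (M/K) + M % K + 1 = K * (M/K + 1) := by rw [mul_add]; omega
      rw [this, Nat.mul_mod_right]
    · conv_lhs => rw [← Nat.div_add_mod M K]
      have : K * (M/K) + M % K + 1 = K * (M/K) + (M % K + 1) := by ring
      rw [this, Nat.mul_add_mod]
      exact Nat.mod_eq_of_lt (by omega)
  have hKe : K % 2 = 0 := by
    rw [hKdef, pow_succ]; exact Nat.mul_mod_left _ _
  unfold mu
  rw [← hKdef, show 2^(r+1+1) = 2*K by rw [hKdef]; ring, h1, h2]
  simp only [min_def]
  split_ifs <;> omega

lemma Fn_zero_N (m : ℕ) : Fn m 0 = 0 := by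
  unfold Fn mu
  simp

lemma Fn_even (m M : ℕ) : Fn (m+1) (2*M) = 2 * Fn m M := by
  unfold Fn
  rw [Finset.sum_range_succ']
  have h0 : 2^(m+1-1-0) * mu 0 (2*M) = 0 := by
    have : mu 0 (2*M) = 0 := by
      unfold mu
      have e : (2:ℕ)^(0+1) = 2 := by norm_num
      rw [e]
      simp only [min_def]
      split_ifs <;> omega
    simp [this]
  rw [h0, add_zero, Finset.mul_sum]
  apply Finset.sum_congr rfl
  intro i hi
  simp only [mem_range] at hi
  rw [mu_even]
  have : m+1-1-(i+1) = m-1-i := by omega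
  rw [this]; ring

lemma Fn_odd (m M : ℕ) : Fn (m+1) (2*M+1) = 2^m + Fn m M + Fn m (M+1) := by
  unfold Fn
  rw [Finset.sum_range_succ']
  have h0 : 2^(m+1-1-0) * mu 0 (2*M+1) = 2^m := by
    have : mu 0 (2*M+1) = 1 := by
      unfold mu
      have e : (2:ℕ)^(0+1) = 2 := by norm_num
      rw [e]
      simp only [min_def]
      split_ifs <;> omega
    simp [this]
  rw [h0]
  have hterm : ∀ i ∈ range m, 2^(m+1-1-(i+1)) * mu (i+1) (2*M+1)
      = 2^(m-1-i) * mu i M + 2^(m-1-i) * mu i (M+1) := by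
    intro i hi
    rw [mu_odd, show m+1-1-(i+1) = m-1-i by omega]
    ring
  rw [Finset.sum_congr rfl hterm, Finset.sum_add_distrib]
  ring

/-- the pair `(jp, jm)` of extreme maximizer indices. -/
def jpm : ℕ → ℕ → ℕ × ℕ
  | 0, _ => (1, 0)
  | m+1, N =>
    if N % 2 = 0 then ((jpm m (N/2)).1 + 2^m, (jpm m (N/2)).2)
    else if (N/2) % 2 = 0 then ((jpm m (N/2+1)).1, (jpm m (N/2+1)).1)
    else ((jpm m (N/2)).2 + 2^m, (jpm m (N/2)).2 + 2^m)

lemma jpm_even (m M : ℕ) : jpm (m+1) (2*M) = ((jpm m M).1 + 2^m, (jpm m M).2) := by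
  have h1 : (2*M) % 2 = 0 := by omega
  have h2 : (2*M) / 2 = M := by omega
  rw [jpm, if_pos h1, h2]

lemma jpm_odd_even (m M : ℕ) (h : M % 2 = 0) :
    jpm (m+1) (2*M+1) = ((jpm m (M+1)).1, (jpm m (M+1)).1) := by
  have h1 : (2*M+1) % 2 = 1 := by omega
  have h2 : (2*M+1) / 2 = M := by omega
  rw [jpm, if_neg (by omega), h2, if_pos h]

lemma jpm_odd_odd (m M : ℕ) (h : M % 2 = 1) :
    jpm (m+1) (2*M+1) = ((jpm m M).2 + 2^m, (jpm m M).2 + 2^m) := by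
  have h1 : (2*M+1) % 2 = 1 := by omega
  have h2 : (2*M+1) / 2 = M := by omega
  rw [jpm, if_neg (by omega), h2, if_neg (by omega)]

lemma jpm_range (m : ℕ) : ∀ N, 1 ≤ (jpm m N).1 ∧ (jpm m N).1 ≤ 2^m ∧ (jpm m N).2 ≤ 2^m := by
  induction m with
  | zero => intro N; simp [jpm]
  | succ m ih =>
    intro N
    have hp : (2:ℕ)^(m+1) = 2^m + 2^m := by ring
    rcases Nat.even_or_odd' N with ⟨M, hM | hM⟩ <;> subst hM
    · rw [jpm_even]
      have := ih M
      simp only []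
      omega
    · rcases Nat.mod_two_eq_zero_or_one M with h | h
      · rw [jpm_odd_even m M h]
        have h1 := ih (M+1)
        have h2 : (1:ℕ) ≤ 2^(m+1) := Nat.one_le_two_pow
        simp only []
        omega
      · rw [jpm_odd_odd m M h]
        have := ih M
        simp only []
        omega

/-- KEY comparison lemma for consecutive `N`. -/
lemma key (m : ℕ) : ∀ M, M < 2^m →
    (Fn m (M+1) + (jpm m (M+1)).1 ≤ Fn m M + 2^m) ∧
    (Fn m M ≤ Fn m (M+1) + (jpm m M).2) ∧
    (M % 2 = 0 → Fn m (M+1) + (jpm m (M+1)).1 = Fn m M + 2^m) ∧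
    (M % 2 = 1 → Fn m M = Fn m (M+1) + (jpm m M).2) := by
  induction m with
  | zero =>
    intro M hM
    interval_cases M
    refine ⟨?_, ?_, ?_, ?_⟩ <;> simp [Fn, jpm]
  | succ m ih =>
    intro M hM
    have hp : (2:ℕ)^(m+1) = 2^m + 2^m := by ring
    rcases Nat.even_or_odd' M with ⟨K, hK | hK⟩ <;> subst hK
    · -- M = 2K even, M+1 = 2K+1
      have hKlt : K < 2^m := by omega
      obtain ⟨ka, kb, kc, kd⟩ := ih K hKlt
      have hFM : Fn (m+1) (2*K) = 2 * Fn m K := Fn_even m K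
      have hFM1 : Fn (m+1) (2*K+1) = 2^m + Fn m K + Fn m (K+1) := Fn_odd m K
      have hjm : (jpm (m+1) (2*K)).2 = (jpm m K).2 := by rw [jpm_even]
      have hmod : (2*K) % 2 = 0 := by omega
      rcases Nat.mod_two_eq_zero_or_one K with h | h
      · have hj1 : (jpm (m+1) (2*K+1)).1 = (jpm m (K+1)).1 := by rw [jpm_odd_even m K h]
        have := kc h
        refine ⟨by omega, by omega, fun _ => by omega, fun hx => by omega⟩
      · have hj1 : (jpm (m+1) (2*K+1)).1 = (jpm m K).2 + 2^m := by rw [jpm_odd_odd m K h]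
        have := kd h
        refine ⟨by omega, by omega, fun _ => by omega, fun hx => by omega⟩
    · -- M = 2K+1 odd, M+1 = 2(K+1)
      have hKlt : K < 2^m := by omega
      obtain ⟨ka, kb, kc, kd⟩ := ih K hKlt
      have hFM : Fn (m+1) (2*K+1) = 2^m + Fn m K + Fn m (K+1) := Fn_odd m K
      have hFM1 : Fn (m+1) (2*K+1+1) = 2 * Fn m (K+1) := by
        have : 2*K+1+1 = 2*(K+1) := by ring
        rw [this, Fn_even]
      have hj1 : (jpm (m+1) (2*K+1+1)).1 = (jpm m (K+1)).1 + 2^m := by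
        have : 2*K+1+1 = 2*(K+1) := by ring
        rw [this, jpm_even]
      have hmod : (2*K+1) % 2 = 1 := by omega
      rcases Nat.mod_two_eq_zero_or_one K with h | h
      · have hjm : (jpm (m+1) (2*K+1)).2 = (jpm m (K+1)).1 := by rw [jpm_odd_even m K h]
        have := kc h
        refine ⟨by omega, by omega, fun hx => by omega, fun _ => by omega⟩
      · have hjm : (jpm (m+1) (2*K+1)).2 = (jpm m K).2 + 2^m := by rw [jpm_odd_odd m K h]
        have := kd h
        refine ⟨by omega, by omega, fun hx => by omega, fun _ => by omega⟩



lemma jpm_even_1 (m M : ℕ) : (jpm (m+1) (2*M)).1 = (jpm m M).1 + 2^m := by rw [jpm_even]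
lemma jpm_even_2 (m M : ℕ) : (jpm (m+1) (2*M)).2 = (jpm m M).2 := by rw [jpm_even]
lemma jpm_oe_1 (m M : ℕ) (h : M % 2 = 0) : (jpm (m+1) (2*M+1)).1 = (jpm m (M+1)).1 := by
  rw [jpm_odd_even m M h]
lemma jpm_oe_2 (m M : ℕ) (h : M % 2 = 0) : (jpm (m+1) (2*M+1)).2 = (jpm m (M+1)).1 := by
  rw [jpm_odd_even m M h]
lemma jpm_oo_1 (m M : ℕ) (h : M % 2 = 1) : (jpm (m+1) (2*M+1)).1 = (jpm m M).2 + 2^m := by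
  rw [jpm_odd_odd m M h]
lemma jpm_oo_2 (m M : ℕ) (h : M % 2 = 1) : (jpm (m+1) (2*M+1)).2 = (jpm m M).2 + 2^m := by
  rw [jpm_odd_odd m M h]

lemma cnt_base (N : ℕ) : cnt 0 N 1 = N := by
  simp [cnt, bitrev]

/-- MAIN invariant: bounds and attainment for the integer discrepancy function. -/
lemma main (m : ℕ) : ∀ N ≤ 2^m,
    (∀ j ≤ 2^m,
      gZ m N j ≤ (Fn m N : ℤ) ∧
      gZ m N j + j ≤ (Fn m N : ℤ) + (jpm m N).1 ∧
      gZ m N j ≤ (Fn m N : ℤ) + j - (jpm m N).2 ∧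
      0 ≤ gZ m N j) ∧
    gZ m N (jpm m N).1 = (Fn m N : ℤ) ∧
    gZ m N (jpm m N).2 = (Fn m N : ℤ) := by
  induction m with
  | zero =>
    intro N hN
    simp only [pow_zero] at hN
    have hF : Fn 0 N = 0 := by simp [Fn]
    have hg1 : gZ 0 N 1 = 0 := by
      simp only [gZ, cnt_base]
      push_cast
      ring
    have hjp : jpm 0 N = (1, 0) := rfl
    refine ⟨?_, ?_, ?_⟩
    · intro j hj
      interval_cases j
      · rw [hF, hjp, gZ_zero]; norm_num
      · rw [hF, hjp, hg1]; norm_num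
    · rw [hjp, hF, hg1]; norm_num
    · rw [hjp, hF, gZ_zero]; norm_num
  | succ m ih =>
    intro N hN
    have hp : (2:ℕ)^(m+1) = 2^m + 2^m := by ring
    have hcast : ((2^m : ℕ) : ℤ) = (2:ℤ)^m := by push_cast; ring
    rcases Nat.even_or_odd' N with ⟨M, hM | hM⟩ <;> subst hM
    · -- even case N = 2M
      have hMle : M ≤ 2^m := by omega
      obtain ⟨hU, hE1, hE2⟩ := ih M hMle
      obtain ⟨r1, r2, r3⟩ := jpm_range m M
      have hFe := Fn_even m M
      refine ⟨?_, ?_, ?_⟩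
      · intro j hj
        by_cases hjl : j ≤ 2^m
        · obtain ⟨u0, u1, u2, u3⟩ := hU j hjl
          rw [gZ_left_even m M j hjl, hFe, jpm_even_1, jpm_even_2]
          refine ⟨by omega, by omega, by omega, by omega⟩
        · obtain ⟨i, rfl, hi1, hi2⟩ : ∃ i, j = 2^m + i ∧ 1 ≤ i ∧ i ≤ 2^m :=
            ⟨j - 2^m, by omega, by omega, by omega⟩
          obtain ⟨u0, u1, u2, u3⟩ := hU i hi2
          have u00 := (hU 0 (by positivity)).1
          rw [gZ_right_even m M i, hFe, jpm_even_1, jpm_even_2]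
          refine ⟨by omega, by omega, by omega, by omega⟩
      · rw [jpm_even_1, hFe, add_comm ((jpm m M).1) (2^m), gZ_right_even m M]
        rw [hE1]; push_cast; ring
      · rw [jpm_even_2, hFe, gZ_left_even m M _ r3]
        rw [hE2]; push_cast; ring
    · -- odd case N = 2M+1
      have hMlt : M < 2^m := by omega
      have hM1le : M + 1 ≤ 2^m := by omega
      obtain ⟨hU0, hE10, hE20⟩ := ih M hMlt.le
      obtain ⟨hU1, hE11, hE21⟩ := ih (M+1) hM1le
      obtain ⟨q1, q2, q3⟩ := jpm_range m M
      obtain ⟨s1, s2, s3⟩ := jpm_range m (M+1)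
      obtain ⟨ka, kb, kc, kd⟩ := key m M hMlt
      have hFo := Fn_odd m M
      have hz0 : gZ m M 0 = 0 := gZ_zero m M
      rcases Nat.mod_two_eq_zero_or_one M with hpar | hpar
      · -- M even
        have keq := kc hpar
        refine ⟨?_, ?_, ?_⟩
        · intro j hj
          by_cases hjl : j ≤ 2^m
          · obtain ⟨u0, u1, u2, u3⟩ := hU1 j hjl
            rw [gZ_left_odd m M j hjl, hFo, jpm_oe_1 m M hpar, jpm_oe_2 m M hpar]
            refine ⟨by omega, by omega, by omega, by omega⟩
          · obtain ⟨i, rfl, hi1, hi2⟩ : ∃ i, j = 2^m + i ∧ 1 ≤ i ∧ i ≤ 2^m :=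
              ⟨j - 2^m, by omega, by omega, by omega⟩
            obtain ⟨u0, u1, u2, u3⟩ := hU0 i hi2
            rw [gZ_right_odd m M i, hFo, jpm_oe_1 m M hpar, jpm_oe_2 m M hpar]
            refine ⟨by omega, by omega, by omega, by omega⟩
        · rw [jpm_oe_1 m M hpar, hFo, gZ_left_odd m M _ s2, hE11]
          omega
        · rw [jpm_oe_2 m M hpar, hFo, gZ_left_odd m M _ s2, hE11]
          omega
      · -- M odd
        have keq := kd hpar
        refine ⟨?_, ?_, ?_⟩
        · intro j hj
          by_cases hjl : j ≤ 2^m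
          · obtain ⟨u0, u1, u2, u3⟩ := hU1 j hjl
            rw [gZ_left_odd m M j hjl, hFo, jpm_oo_1 m M hpar, jpm_oo_2 m M hpar]
            refine ⟨by omega, by omega, by omega, by omega⟩
          · obtain ⟨i, rfl, hi1, hi2⟩ : ∃ i, j = 2^m + i ∧ 1 ≤ i ∧ i ≤ 2^m :=
              ⟨j - 2^m, by omega, by omega, by omega⟩
            obtain ⟨u0, u1, u2, u3⟩ := hU0 i hi2
            rw [gZ_right_odd m M i, hFo, jpm_oo_1 m M hpar, jpm_oo_2 m M hpar]
            refine ⟨by omega, by omega, by omega, by omega⟩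
        · rw [jpm_oo_1 m M hpar, hFo, add_comm ((jpm m M).2) (2^m), gZ_right_odd m M, hE20]
          omega
        · rw [jpm_oo_2 m M hpar, hFo, add_comm ((jpm m M).2) (2^m), gZ_right_odd m M, hE20]
          omega

lemma vdc_eq_sum (n L : ℕ) (hL : n < 2^L) :
    vdc 2 n = ∑ j ∈ range L, ((n / 2^j % 2 : ℕ) : ℝ) / 2^(j+1) := by
  have hzero : ∀ j, n < 2^j → ((n / 2^j % 2 : ℕ) : ℝ) / 2^(j+1) = 0 := by
    intro j hj
    rw [Nat.div_eq_of_lt hj]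
    simp
  have key : ∀ K, n + 1 ≤ K → ∑ j ∈ range K, ((n / 2^j % 2 : ℕ) : ℝ) / 2^(j+1) = vdc 2 n := by
    intro K hK
    rw [vdc]
    refine (Finset.sum_subset (Finset.range_subset_range.mpr hK) ?_).symm
    intro j hjK hjn
    simp only [Finset.mem_range, not_lt] at hjn
    exact hzero j (lt_of_lt_of_le (Nat.lt_two_pow_self (n := n)) (Nat.pow_le_pow_right (by norm_num) (by omega)))
  have keyL : ∀ K, L ≤ K → ∑ j ∈ range K, ((n / 2^j % 2 : ℕ) : ℝ) / 2^(j+1)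
      = ∑ j ∈ range L, ((n / 2^j % 2 : ℕ) : ℝ) / 2^(j+1) := by
    intro K hK
    refine (Finset.sum_subset (Finset.range_subset_range.mpr hK) ?_).symm
    intro j hjK hjn
    simp only [Finset.mem_range, not_lt] at hjn
    exact hzero j (lt_of_lt_of_le hL (Nat.pow_le_pow_right (by norm_num) hjn))
  rw [← key (n+1+L) (by omega), keyL (n+1+L) (by omega)]

lemma vdc_bitrev (m : ℕ) : ∀ n, n < 2^m → vdc 2 n = (bitrev m n : ℝ) / 2^m := by
  induction m with
  | zero =>
    intro n hn
    interval_cases n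
    simp [vdc, bitrev]
  | succ m ih =>
    intro n hn
    have hp : (2:ℕ)^(m+1) = 2^m + 2^m := by ring
    have h2 : n / 2 < 2^m := by omega
    rw [vdc_eq_sum n (m+1) hn, Finset.sum_range_succ']
    have hterm : ∀ i ∈ range m, ((n / 2^(i+1) % 2 : ℕ) : ℝ) / 2^(i+1+1)
        = (1/2) * (((n/2) / 2^i % 2 : ℕ) : ℝ) / 2^(i+1) := by
      intro i _
      have e1 : n / 2^(i+1) = (n/2) / 2^i := by
        rw [Nat.div_div_eq_div_mul]
        congr 1
        rw [pow_succ]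
        ring
      rw [e1]
      have e2 : (2:ℝ)^(i+1+1) = 2 * 2^(i+1) := by ring
      rw [e2]
      ring
    rw [Finset.sum_congr rfl hterm]
    have e3 : ∑ i ∈ range m, (1/2) * (((n/2) / 2^i % 2 : ℕ) : ℝ) / 2^(i+1)
        = (1/2) * ∑ i ∈ range m, (((n/2) / 2^i % 2 : ℕ) : ℝ) / 2^(i+1) := by
      rw [Finset.mul_sum]
      apply Finset.sum_congr rfl
      intro i _
      ring
    rw [e3, ← vdc_eq_sum (n/2) m h2, ih (n/2) h2]
    have hb : bitrev (m+1) n = n % 2 * 2^m + bitrev m (n / 2) := rfl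
    rw [hb]
    have : n / 2^0 % 2 = n % 2 := by norm_num
    rw [this]
    have hm2 : n % 2 < 2 := Nat.mod_lt _ (by norm_num)
    push_cast
    have hpow : (2:ℝ)^m ≠ 0 := by positivity
    field_simp
    ring

lemma vdc_nonneg (n : ℕ) : 0 ≤ vdc 2 n := by
  rw [vdc]
  positivity

lemma vdc_lt_one (n : ℕ) : vdc 2 n < 1 := by
  rw [vdc_bitrev n n (Nat.lt_two_pow_self (n := n))]
  rw [div_lt_one (by positivity)]
  exact_mod_cast bitrev_lt n n


lemma Acard (m N j : ℕ) (hN : N ≤ 2^m) (hj1 : 1 ≤ j) (t : ℝ)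
    (h1 : ((j:ℝ) - 1)/2^m < t) (h2 : t ≤ (j:ℝ)/2^m) :
    ((Finset.range N).filter (fun n => vdc 2 n ∈ Set.Ico (0:ℝ) t)).card = cnt m N j := by
  unfold cnt
  congr 1
  apply Finset.filter_congr
  intro n hn
  simp only [Finset.mem_range] at hn
  have hn2 : n < 2^m := lt_of_lt_of_le hn hN
  rw [vdc_bitrev m n hn2]
  simp only [Set.mem_Ico]
  have hPR : (0:ℝ) < 2^m := by positivity
  constructor
  · rintro ⟨-, hlt⟩
    by_contra hge
    push_neg at hge
    have hjb : (j:ℝ) ≤ (bitrev m n : ℝ) := by exact_mod_cast hge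
    have hd : (j:ℝ)/2^m ≤ (bitrev m n : ℝ)/2^m := (div_le_div_iff_of_pos_right hPR).mpr hjb
    linarith
  · intro hlt
    refine ⟨by positivity, ?_⟩
    have hb1 : (bitrev m n : ℝ) ≤ (j:ℝ) - 1 := by
      have hb : (bitrev m n : ℝ) + 1 ≤ (j:ℝ) := by exact_mod_cast hlt
      linarith
    have hd : (bitrev m n : ℝ)/2^m ≤ ((j:ℝ)-1)/2^m := (div_le_div_iff_of_pos_right hPR).mpr hb1
    linarith

lemma nint_eq (N r : ℕ) : nint ((N:ℝ)/2^(r+1)) = (mu r N : ℝ) / 2^(r+1) := by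
  have hK : 0 < 2^(r+1) := by positivity
  set K := 2^(r+1) with hKdef
  have hKR : (0:ℝ) < (K:ℝ) := by exact_mod_cast hK
  have hKcast : ((K:ℕ):ℝ) = (2:ℝ)^(r+1) := by rw [hKdef]; push_cast; ring
  rw [← hKcast]
  have hdm : K * (N / K) + N % K = N := Nat.div_add_mod N K
  have hsK : N % K < K := Nat.mod_lt N hK
  have hNsplit : (N:ℝ) = ((K:ℕ):ℝ) * ((N / K : ℕ):ℝ) + ((N % K : ℕ):ℝ) := by
    exact_mod_cast hdm.symm
  have hx : (N:ℝ)/(K:ℝ) = ((N % K : ℕ):ℝ)/(K:ℝ) + ((N / K : ℕ):ℝ) := by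
    rw [hNsplit, add_div, mul_comm, mul_div_assoc, div_self (ne_of_gt hKR), mul_one, add_comm]
  rw [hx, nint, round_add_natCast]
  rw [show (((N % K : ℕ):ℝ)/K + ((N / K : ℕ):ℝ) - ↑(round (((N % K : ℕ):ℝ)/K) + (N / K : ℕ)))
      = ((N % K : ℕ):ℝ)/K - (round (((N % K : ℕ):ℝ)/K) : ℤ) from by
        rw [Int.cast_add, Int.cast_natCast]; ring]
  by_cases hc : 2 * (N % K) < K
  · have hlt : ((N % K : ℕ):ℝ)/K < 1/2 := by
      rw [div_lt_iff₀ hKR]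
      have h : (2:ℝ) * ((N % K : ℕ):ℝ) < ((K:ℕ):ℝ) := by exact_mod_cast hc
      linarith
    have h0 : (0:ℝ) ≤ ((N % K : ℕ):ℝ)/K := by positivity
    have hround : round (((N % K : ℕ):ℝ)/K) = 0 := by
      rw [round_eq]
      apply Int.floor_eq_zero_iff.mpr
      constructor
      · linarith
      · linarith
    rw [hround]
    have hmu : mu r N = N % K := by unfold mu; rw [← hKdef]; omega
    rw [hmu]
    push_cast
    rw [sub_zero, abs_of_nonneg h0]
  · push_neg at hc
    have hge : (1:ℝ)/2 ≤ ((N % K : ℕ):ℝ)/K := by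
      rw [le_div_iff₀ hKR]
      have h : ((K:ℕ):ℝ) ≤ (2:ℝ) * ((N % K : ℕ):ℝ) := by exact_mod_cast hc
      linarith
    have hlt1 : ((N % K : ℕ):ℝ)/K < 1 := by
      rw [div_lt_one hKR]
      exact_mod_cast hsK
    have hround : round (((N % K : ℕ):ℝ)/K) = 1 := by
      rw [round_eq]
      rw [Int.floor_eq_iff]
      constructor
      · push_cast; linarith
      · push_cast; linarith
    rw [hround]
    have hmu : mu r N = K - N % K := by unfold mu; rw [← hKdef]; omega
    rw [hmu]
    have hcast2 : ((K - N % K : ℕ) : ℝ) = ((K:ℕ):ℝ) - ((N % K : ℕ):ℝ) := by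
      have h : N % K ≤ K := hsK.le
      push_cast [h]
      ring
    rw [hcast2]
    rw [abs_of_nonpos (by push_cast; linarith)]
    push_cast
    field_simp
    ring

lemma Fn_div (m N : ℕ) : ((Fn m N : ℝ)) / 2^m = ∑ r ∈ Finset.range m, nint ((N:ℝ)/2^(r+1)) := by
  unfold Fn
  push_cast
  rw [Finset.sum_div]
  apply Finset.sum_congr rfl
  intro r hr
  simp only [Finset.mem_range] at hr
  rw [nint_eq]
  have he : (2:ℝ)^(m-1-r) * 2^(r+1) = 2^m := by
    rw [← pow_add]
    congr 1
    omega
  rw [div_eq_div_iff (by positivity) (by positivity)]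
  linear_combination ((mu r N : ℕ):ℝ) * he

theorem dstar_val (m N : ℕ) (hN1 : 1 ≤ N) (hN2 : N ≤ 2^m) :
    dstar (vdc 2) N = ((Fn m N : ℝ) + N) / (2^m * N) := by
  obtain ⟨hU, hE1, hE2⟩ := main m N hN2
  obtain ⟨r1, r2, r3⟩ := jpm_range m N
  have hNR : (0:ℝ) < N := by exact_mod_cast hN1
  have hPR : (0:ℝ) < 2^m := by positivity
  set B := ((Fn m N : ℝ) + N) / (2^m * N) with hBdef
  have hBnn : (0:ℝ) ≤ B := by positivity
  haveI : Nonempty (Set.Icc (0:ℝ) 1) := ⟨⟨0, by norm_num⟩⟩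
  have hub : ∀ t : Set.Icc (0:ℝ) 1,
      |(((Finset.range N).filter (fun n => vdc 2 n ∈ Set.Ico (0:ℝ) (t:ℝ))).card : ℝ)/N - (t:ℝ)| ≤ B := by
    rintro ⟨t, ht0, ht1⟩
    simp only
    rcases eq_or_lt_of_le ht0 with hteq | htpos
    · subst hteq
      have hfe : ((Finset.range N).filter (fun n => vdc 2 n ∈ Set.Ico (0:ℝ) (0:ℝ))).card = 0 := by
        simp [Set.Ico_self]
      rw [hfe]
      simpa using hBnn
    · set j := ⌈t * 2^m⌉₊ with hjdef
      have hj1 : 1 ≤ j := Nat.ceil_pos.mpr (by positivity)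
      have hj2 : j ≤ 2^m := by
        rw [hjdef, Nat.ceil_le]
        push_cast
        nlinarith
      have hlow : ((j:ℝ) - 1)/2^m < t := by
        rw [div_lt_iff₀ hPR]
        have h1 : ((j - 1 : ℕ):ℝ) < t * 2^m := by
          rw [← Nat.lt_ceil]
          omega
        have hcast : ((j - 1 : ℕ):ℝ) = (j:ℝ) - 1 := by
          push_cast [hj1]
          ring
        linarith [hcast ▸ h1]
      have hhigh : t ≤ (j:ℝ)/2^m := by
        rw [le_div_iff₀ hPR]
        exact Nat.le_ceil _
      have hcard := Acard m N j hN2 hj1 t hlow hhigh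
      rw [hcard]
      obtain ⟨u0, -, -, u3⟩ := hU j hj2
      set c := cnt m N j with hcdef
      have hu0R : (2:ℝ)^m * c - N * j ≤ (Fn m N : ℝ) := by
        have h := u0
        unfold gZ at h
        have h2 : (2:ℝ)^m * (cnt m N j : ℝ) - (N:ℝ)*(j:ℝ) ≤ ((Fn m N : ℕ) : ℝ) := by
          exact_mod_cast h
        linarith [h2]
      have hu3R : (0:ℝ) ≤ 2^m * c - N * j := by
        have h := u3
        unfold gZ at h
        have h2 : (0:ℝ) ≤ (2:ℝ)^m * (cnt m N j : ℝ) - (N:ℝ)*(j:ℝ) := by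
          exact_mod_cast h
        linarith [h2]
      rw [abs_le]
      constructor
      · have e2 : (c:ℝ)/N - (j:ℝ)/2^m = (2^m * c - N * j)/(2^m * N) := by
          field_simp
        have e3 : (0:ℝ) ≤ (2^m * c - N * j)/(2^m * N) := by positivity
        linarith
      · have e2 : (c:ℝ)/N - ((j:ℝ)-1)/2^m = (2^m * c - N * ((j:ℝ)-1))/(2^m * N) := by
          field_simp
        have e3 : (2^m * c - N * ((j:ℝ)-1))/(2^m * N) ≤ B := by
          rw [hBdef]
          have hAB : 2^m * (c:ℝ) - N*((j:ℝ)-1) ≤ (Fn m N:ℝ) + N := by linarith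
          gcongr
        linarith
  have hbdd : BddAbove (Set.range (fun t : Set.Icc (0:ℝ) 1 =>
      |(((Finset.range N).filter (fun n => vdc 2 n ∈ Set.Ico (0:ℝ) (t:ℝ))).card : ℝ)/N - (t:ℝ)|)) := by
    refine ⟨B, ?_⟩
    rintro y ⟨t, rfl⟩
    exact hub t
  unfold dstar
  apply le_antisymm
  · exact ciSup_le hub
  · apply le_of_forall_pos_le_add
    intro ε hε
    set jp := (jpm m N).1 with hjp
    set δ := min ε ((1:ℝ)/2^m) with hδdef
    have hδ0 : 0 < δ := lt_min hε (by positivity)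
    have hδ1 : δ ≤ 1/2^m := min_le_right _ _
    have hδ2 : δ ≤ ε := min_le_left _ _
    set t0 := ((jp:ℝ) - 1)/2^m + δ with ht0def
    have hjpR : (1:ℝ) ≤ (jp:ℝ) := by exact_mod_cast r1
    have hjpR2 : (jp:ℝ) ≤ 2^m := by
      have h : ((jp:ℕ):ℝ) ≤ ((2^m : ℕ):ℝ) := by exact_mod_cast r2
      push_cast at h
      linarith
    have hsum2 : ((jp:ℝ) - 1)/2^m + 1/2^m = (jp:ℝ)/2^m := by
      field_simp
      ring
    have hhigh0 : t0 ≤ (jp:ℝ)/2^m := by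
      rw [ht0def, ← hsum2]
      linarith
    have hlow0 : ((jp:ℝ) - 1)/2^m < t0 := by
      rw [ht0def]
      linarith
    have ht0mem : t0 ∈ Set.Icc (0:ℝ) 1 := by
      constructor
      · have h : (0:ℝ) ≤ ((jp:ℝ) - 1)/2^m := div_nonneg (by linarith) hPR.le
        rw [ht0def]
        linarith
      · have h : (jp:ℝ)/2^m ≤ 1 := by
          rw [div_le_one hPR]
          exact hjpR2
        exact le_trans hhigh0 h
    have hcard := Acard m N jp hN2 r1 t0 hlow0 hhigh0
    set c := cnt m N jp with hcdef
    have hE1R : (2:ℝ)^m * c - N * jp = (Fn m N : ℝ) := by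
      have h := hE1
      unfold gZ at h
      have h2 : (2:ℝ)^m * (cnt m N jp : ℝ) - (N:ℝ)*(jp:ℝ) = ((Fn m N : ℕ) : ℝ) := by
        exact_mod_cast h
      linarith [h2]
    have e2 : (c:ℝ)/N - ((jp:ℝ)-1)/2^m = (2^m * c - N * ((jp:ℝ)-1))/(2^m * N) := by
      field_simp
    have hBeq : B = (c:ℝ)/N - ((jp:ℝ)-1)/2^m := by
      rw [hBdef, e2]
      congr 1
      linarith
    have hle := le_ciSup hbdd ⟨t0, ht0mem⟩
    simp only at hle
    rw [hcard] at hle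
    have habs : (c:ℝ)/N - t0 ≤ |(c:ℝ)/N - t0| := le_abs_self _
    have hval : (c:ℝ)/N - t0 = B - δ := by
      rw [hBeq, ht0def]
      ring
    linarith

lemma nint_small (x : ℝ) (h0 : 0 ≤ x) (h2 : x ≤ 1/2) : nint x = x := by
  rw [nint, round_eq]
  rcases lt_or_eq_of_le h2 with hlt | heq
  · have hfl : ⌊x + 1/2⌋ = 0 := by
      apply Int.floor_eq_zero_iff.mpr
      constructor
      · simpa using by linarith
      · simpa using by linarith
    rw [hfl]
    push_cast
    rw [sub_zero, abs_of_nonneg h0]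
  · rw [heq]
    norm_num

end VdC

/-- Béjian–Faure formula: `N D*_N(Y₂) = ∑_{r ≥ 1} ‖N / 2 ^ r‖`, and for `N ≤ 2 ^ m`
this equals the finite sum up to `m` plus `N / 2 ^ m`. -/
theorem vdc_star_discrepancy_formula (N : ℕ) (hN : 1 ≤ N) :
    ((N : ℝ) * dstar (vdc 2) N = ∑' r : ℕ, nint ((N : ℝ) / 2 ^ (r + 1))) ∧
    ∀ m : ℕ, N ≤ 2 ^ m →
      (N : ℝ) * dstar (vdc 2) N =
        (∑ r ∈ Finset.range m, nint ((N : ℝ) / 2 ^ (r + 1))) + (N : ℝ) / 2 ^ m := by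
  have hpart : ∀ m : ℕ, N ≤ 2^m → (N:ℝ) * dstar (vdc 2) N
      = (∑ r ∈ Finset.range m, nint ((N:ℝ)/2^(r+1))) + (N:ℝ)/2^m := by
    intro m hm
    rw [VdC.dstar_val m N hN hm, ← VdC.Fn_div m N]
    have hNR : (N:ℝ) ≠ 0 := Nat.cast_ne_zero.mpr (by omega)
    field_simp
  refine ⟨?_, hpart⟩
  have hmN : N ≤ 2^N := (Nat.lt_two_pow_self (n := N)).le
  have hsmall : ∀ i : ℕ, nint ((N:ℝ)/2^(i + N + 1)) = (N:ℝ)/2^(i + N + 1) := by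
    intro i
    apply VdC.nint_small _ (by positivity)
    have h1 : (N:ℝ) ≤ 2^N := by exact_mod_cast hmN
    have h2 : (2:ℝ)^(i+N+1) = 2^N * 2^(i+1) := by rw [← pow_add]; congr 1; omega
    have h4 : (1:ℝ) ≤ 2^i := one_le_pow₀ (by norm_num)
    rw [div_le_iff₀ (by positivity), h2]
    have h5 : (2:ℝ)^(i+1) = 2 * 2^i := by ring
    nlinarith [h1, h4, pow_pos (show (0:ℝ) < 2 by norm_num) N]
  have hshift : (fun i => nint ((N:ℝ)/2^(i + N + 1))) = (fun i => ((N:ℝ)/2^(N+1)) * (1/2)^i) := by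
    funext i
    rw [hsmall i]
    have h2 : (2:ℝ)^(i+N+1) = 2^(N+1) * 2^i := by rw [← pow_add]; congr 1; omega
    rw [h2, one_div_pow, div_mul_div_comm, mul_one]
  have hsummable : Summable (fun r => nint ((N:ℝ)/2^(r+1))) := by
    rw [← summable_nat_add_iff N]
    refine Summable.congr (summable_geometric_two.mul_left ((N:ℝ)/2^(N+1))) ?_
    intro b
    exact (congrFun hshift b).symm
  have htail : ∑' i : ℕ, nint ((N:ℝ)/2^(i + N + 1)) = (N:ℝ)/2^N := by
    rw [hshift, tsum_mul_left, tsum_geometric_two]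
    have h5 : (2:ℝ)^(N+1) = 2^N * 2 := by ring
    rw [h5]
    field_simp
  rw [hpart N hmN, ← Summable.sum_add_tsum_nat_add N hsummable]
  congr 1
  exact htail.symm
end

section
/- For all N ∈ ℕ, the L₂-discrepancy of the binary van der Corput sequence satisfies 4(N·L_{2,N}(Y₂))² = (Σ_{j=1}^∞ ‖N/2ʲ‖)² + Σ_{j=1}^∞ ‖N/2ʲ‖². -/
open scoped Classical
open Filter

/-- The local discrepancy of the first `N` terms of a sequence at `t`. -/
noncomputable def ldisc (x : ℕ → ℝ) (N : ℕ) (t : ℝ) : ℝ :=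
  (((Finset.range N).filter (fun n => x n ∈ Set.Ico (0 : ℝ) t)).card : ℝ) / N - t

/-- The `L₂`-discrepancy of the first `N` terms of a sequence. -/
noncomputable def L2disc (x : ℕ → ℝ) (N : ℕ) : ℝ :=
  Real.sqrt (∫ t in (0 : ℝ)..1, (ldisc x N t) ^ 2)

namespace Faure

lemma nint_nonneg (x : ℝ) : 0 ≤ nint x := abs_nonneg _

lemma nint_add_int (x : ℝ) (n : ℤ) : nint (x + n) = nint x := by
  unfold nint
  rw [round_add_intCast]
  congr 1
  push_cast
  ring

lemma nint_natCast (n : ℕ) : nint (n : ℝ) = 0 := by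
  unfold nint
  rw [round_natCast]
  simp

lemma nint_left {x : ℝ} (h0 : 0 ≤ x) (h : x ≤ 1 / 2) : nint x = x := by
  rcases eq_or_lt_of_le h with h | h
  · rw [h]
    unfold nint
    rw [round_eq]
    norm_num
  · have hr : round x = 0 := by
      rw [round_eq, Int.floor_eq_zero_iff]
      constructor <;> simp <;> linarith
    unfold nint
    rw [hr]
    simpa using abs_of_nonneg h0

lemma nint_right {x : ℝ} (h0 : 1 / 2 ≤ x) (h : x ≤ 1) : nint x = 1 - x := by
  have hr : round x = 1 := by
    rw [round_eq]
    have : ⌊x + 1 / 2⌋ = (1 : ℤ) := by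
      rw [Int.floor_eq_iff]
      constructor <;> push_cast <;> linarith
    exact this
  unfold nint
  rw [hr, abs_of_nonpos (by push_cast; linarith)]
  push_cast
  ring

lemma nint_le_self {x : ℝ} (h : 0 ≤ x) : nint x ≤ x := by
  by_cases hx : x ≤ 1 / 2
  · rw [nint_left h hx]
  · exact le_trans (abs_sub_round x) (by linarith)

lemma nint_le_half (x : ℝ) : nint x ≤ 1 / 2 := abs_sub_round x

lemma summable_nint' {c : ℝ} (hc : 0 ≤ c) : Summable (fun j : ℕ => nint (c / 2 ^ j)) := by
  refine Summable.of_nonneg_of_le (fun j => nint_nonneg _) (fun j => ?_)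
    ((summable_geometric_of_lt_one (r := (1/2:ℝ)) (by norm_num) (by norm_num)).mul_left c)
  have h1 : nint (c / 2 ^ j) ≤ c / 2 ^ j := nint_le_self (by positivity)
  have h2 : c / 2 ^ j = c * (1 / 2 : ℝ) ^ j := by
    rw [div_pow, one_pow]
    ring
  linarith [h2 ▸ h1]

lemma summable_nint {c : ℝ} (hc : 0 ≤ c) : Summable (fun j : ℕ => nint (c / 2 ^ (j + 1))) := by
  have := summable_nint' (c := c / 2) (by linarith)
  convert this using 2 with j
  rw [pow_succ]
  ring

lemma summable_nint_sq {c : ℝ} (hc : 0 ≤ c) :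
    Summable (fun j : ℕ => (nint (c / 2 ^ (j + 1))) ^ 2) := by
  refine Summable.of_nonneg_of_le (fun j => sq_nonneg _) (fun j => ?_)
    ((summable_nint hc).mul_right (1 / 2))
  have h1 := nint_le_half (c / 2 ^ (j + 1))
  have h2 := nint_nonneg (c / 2 ^ (j + 1))
  nlinarith

/-- The series `S N = ∑_{j ≥ 1} ‖N / 2^j‖`. -/
noncomputable def S (N : ℕ) : ℝ := ∑' j : ℕ, nint ((N : ℝ) / 2 ^ (j + 1))

/-- The series `Q N = ∑_{j ≥ 1} ‖N / 2^j‖²`. -/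
noncomputable def Q (N : ℕ) : ℝ := ∑' j : ℕ, (nint ((N : ℝ) / 2 ^ (j + 1))) ^ 2

lemma nint_zero : nint 0 = 0 := by simpa using nint_natCast 0

lemma S_zero : S 0 = 0 := by
  unfold S
  convert tsum_zero with j
  simp [nint_zero]

lemma Q_zero : Q 0 = 0 := by
  unfold Q
  convert tsum_zero with j
  simp [nint_zero]

lemma S_even (M : ℕ) : S (2 * M) = S M := by
  have h : ∀ j : ℕ, nint (((2 * M : ℕ) : ℝ) / 2 ^ (j + 1)) = nint ((M : ℝ) / 2 ^ j) := by
    intro j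
    congr 1
    push_cast
    rw [pow_succ]
    field_simp
  unfold S
  rw [tsum_congr h, Summable.tsum_eq_zero_add (summable_nint' (by positivity))]
  simp [nint_natCast M]

lemma Q_even (M : ℕ) : Q (2 * M) = Q M := by
  have h : ∀ j : ℕ, (nint (((2 * M : ℕ) : ℝ) / 2 ^ (j + 1))) ^ 2
      = (nint ((M : ℝ) / 2 ^ j)) ^ 2 := by
    intro j
    congr 2
    push_cast
    rw [pow_succ]
    field_simp
  have hs : Summable (fun j : ℕ => (nint ((M : ℝ) / 2 ^ j)) ^ 2) := by
    refine Summable.of_nonneg_of_le (fun j => sq_nonneg _) (fun j => ?_)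
      ((summable_nint' (c := (M:ℝ)) (by positivity)).mul_right (1 / 2))
    have h1 := nint_le_half ((M : ℝ) / 2 ^ j)
    have h2 := nint_nonneg ((M : ℝ) / 2 ^ j)
    nlinarith
  unfold Q
  rw [tsum_congr h, Summable.tsum_eq_zero_add hs]
  simp [nint_natCast M]


lemma nint_red (a q j1 : ℕ) :
    nint (((a + q * 2 ^ j1 : ℕ) : ℝ) / 2 ^ j1) = nint ((a : ℝ) / 2 ^ j1) := by
  have h : ((a + q * 2 ^ j1 : ℕ) : ℝ) / 2 ^ j1 = (a : ℝ) / 2 ^ j1 + (q : ℤ) := by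
    push_cast
    field_simp
  rw [h, nint_add_int]

/-- Key dyadic midpoint identity. -/
lemma nint_mid (M j : ℕ) :
    nint (((2 * M + 1 : ℕ) : ℝ) / 2 ^ (j + 2))
        = (nint ((M : ℝ) / 2 ^ (j + 1)) + nint (((M + 1 : ℕ) : ℝ) / 2 ^ (j + 1))) / 2
      ∧ (nint ((M : ℝ) / 2 ^ (j + 1)) - nint (((M + 1 : ℕ) : ℝ) / 2 ^ (j + 1))) ^ 2
        = 1 / 4 ^ (j + 1) := by
  obtain ⟨q, r, hr, hM⟩ : ∃ q r : ℕ, r < 2 ^ (j + 1) ∧ M = r + q * 2 ^ (j + 1) :=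
    ⟨M / 2 ^ (j + 1), M % 2 ^ (j + 1), Nat.mod_lt _ (by positivity),
      by rw [Nat.mod_add_div']⟩
  have e1 : nint ((M : ℝ) / 2 ^ (j + 1)) = nint ((r : ℝ) / 2 ^ (j + 1)) := by
    rw [show (M : ℝ) = ((r + q * 2 ^ (j + 1) : ℕ) : ℝ) by rw [hM], nint_red]
  have e2 : nint (((M + 1 : ℕ) : ℝ) / 2 ^ (j + 1))
      = nint (((r + 1 : ℕ) : ℝ) / 2 ^ (j + 1)) := by
    rw [show ((M + 1 : ℕ) : ℝ) = (((r + 1) + q * 2 ^ (j + 1) : ℕ) : ℝ) by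
      rw [hM]; push_cast; ring, nint_red]
  have e3 : nint (((2 * M + 1 : ℕ) : ℝ) / 2 ^ (j + 2))
      = nint (((2 * r + 1 : ℕ) : ℝ) / 2 ^ (j + 2)) := by
    rw [show ((2 * M + 1 : ℕ) : ℝ) = (((2 * r + 1) + q * 2 ^ (j + 2) : ℕ) : ℝ) by
      rw [hM, pow_succ]; push_cast; ring, nint_red]
  rw [e1, e2, e3]
  have hp1 : (0 : ℝ) < 2 ^ (j + 1) := by positivity
  have hp2 : (0 : ℝ) < 2 ^ (j + 2) := by positivity
  have hq1 : (2 : ℝ) ^ (j + 1) = 2 * 2 ^ j := by rw [pow_succ]; ring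
  have hq2 : (2 : ℝ) ^ (j + 2) = 4 * 2 ^ j := by rw [pow_succ, pow_succ]; ring
  have h4 : (4 : ℝ) ^ (j + 1) = ((2 : ℝ) ^ (j + 1)) ^ 2 := by
    rw [show (4 : ℝ) = 2 ^ 2 by norm_num, ← pow_mul, ← pow_mul, mul_comm]
  have hrR : (r : ℝ) < 2 ^ (j + 1) := by exact_mod_cast hr
  have hrR2 : (r : ℝ) + 1 ≤ 2 ^ (j + 1) := by exact_mod_cast hr
  rcases lt_or_ge r (2 ^ j) with hc | hc
  · have hcR : (r : ℝ) + 1 ≤ 2 ^ j := by exact_mod_cast hc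
    have b1 : nint ((r : ℝ) / 2 ^ (j + 1)) = (r : ℝ) / 2 ^ (j + 1) :=
      nint_left (by positivity) (by rw [div_le_iff₀ hp1]; nlinarith)
    have b2 : nint (((r + 1 : ℕ) : ℝ) / 2 ^ (j + 1)) = ((r + 1 : ℕ) : ℝ) / 2 ^ (j + 1) :=
      nint_left (by positivity) (by rw [div_le_iff₀ hp1]; push_cast; nlinarith)
    have b3 : nint (((2 * r + 1 : ℕ) : ℝ) / 2 ^ (j + 2))
        = ((2 * r + 1 : ℕ) : ℝ) / 2 ^ (j + 2) :=
      nint_left (by positivity) (by rw [div_le_iff₀ hp2]; push_cast; nlinarith)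
    rw [b1, b2, b3]
    constructor
    · push_cast
      field_simp
      try ring
    · rw [h4]
      push_cast
      field_simp
      try ring
  · have hcR : (2 : ℝ) ^ j ≤ (r : ℝ) := by exact_mod_cast hc
    have b1 : nint ((r : ℝ) / 2 ^ (j + 1)) = 1 - (r : ℝ) / 2 ^ (j + 1) :=
      nint_right (by rw [le_div_iff₀ hp1]; nlinarith) (by rw [div_le_one hp1]; nlinarith)
    have b2 : nint (((r + 1 : ℕ) : ℝ) / 2 ^ (j + 1)) = 1 - ((r + 1 : ℕ) : ℝ) / 2 ^ (j + 1) :=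
      nint_right (by rw [le_div_iff₀ hp1]; push_cast; nlinarith)
        (by rw [div_le_one hp1]; push_cast; nlinarith)
    have b3 : nint (((2 * r + 1 : ℕ) : ℝ) / 2 ^ (j + 2))
        = 1 - ((2 * r + 1 : ℕ) : ℝ) / 2 ^ (j + 2) :=
      nint_right (by rw [le_div_iff₀ hp2]; push_cast; nlinarith)
        (by rw [div_le_one hp2]; push_cast; nlinarith)
    rw [b1, b2, b3]
    constructor
    · push_cast
      field_simp
      try ring
    · rw [h4]
      push_cast
      field_simp
      try ring

lemma nint_half_odd (M : ℕ) : nint (((2 * M + 1 : ℕ) : ℝ) / 2 ^ (0 + 1)) = 1 / 2 := by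
  have h : ((2 * M + 1 : ℕ) : ℝ) / 2 ^ (0 + 1) = 1 / 2 + (M : ℤ) := by push_cast; ring
  rw [h, nint_add_int, nint_left] <;> norm_num

lemma S_odd (M : ℕ) : S (2 * M + 1) = (S M + S (M + 1)) / 2 + 1 / 2 := by
  unfold S
  rw [Summable.tsum_eq_zero_add (summable_nint (by positivity)), nint_half_odd]
  have hterm : ∀ j : ℕ, nint (((2 * M + 1 : ℕ) : ℝ) / 2 ^ (j + 1 + 1))
      = nint ((M : ℝ) / 2 ^ (j + 1)) / 2 + nint (((M + 1 : ℕ) : ℝ) / 2 ^ (j + 1)) / 2 := by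
    intro j
    rw [show j + 1 + 1 = j + 2 from rfl, (nint_mid M j).1]
    ring
  rw [tsum_congr hterm,
    Summable.tsum_add ((summable_nint (by positivity)).div_const 2)
      ((summable_nint (by positivity)).div_const 2),
    tsum_div_const, tsum_div_const]
  push_cast
  try ring

lemma Q_odd (M : ℕ) : Q (2 * M + 1) = (Q M + Q (M + 1)) / 2 + 1 / 6 := by
  unfold Q
  rw [Summable.tsum_eq_zero_add (summable_nint_sq (by positivity)), nint_half_odd]
  have hterm : ∀ j : ℕ, (nint (((2 * M + 1 : ℕ) : ℝ) / 2 ^ (j + 1 + 1))) ^ 2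
      = ((nint ((M : ℝ) / 2 ^ (j + 1))) ^ 2 / 2
          + (nint (((M + 1 : ℕ) : ℝ) / 2 ^ (j + 1))) ^ 2 / 2)
        - (1 / 16) * (1 / 4 : ℝ) ^ j := by
    intro j
    obtain ⟨hm, hd⟩ := nint_mid M j
    rw [show j + 1 + 1 = j + 2 from rfl, hm]
    have h4 : (4 : ℝ) ^ (j + 1) = 4 * 4 ^ j := by rw [pow_succ]; ring
    have h5 : ((4:ℝ)^(j+1))⁻¹ = 4⁻¹ * (4^j)⁻¹ := by rw [h4, mul_inv]
    have hne : (4:ℝ)^j ≠ 0 := by positivity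
    rw [one_div_pow]
    field_simp at hd ⊢
    rw [h4] at hd
    nlinarith [hd]
  rw [tsum_congr hterm,
    Summable.tsum_sub
      (((summable_nint_sq (by positivity)).div_const 2).add
        ((summable_nint_sq (by positivity)).div_const 2))
      ((summable_geometric_of_lt_one (r := (1/4:ℝ)) (by norm_num) (by norm_num)).mul_left _),
    Summable.tsum_add ((summable_nint_sq (by positivity)).div_const 2)
      ((summable_nint_sq (by positivity)).div_const 2),
    tsum_div_const, tsum_div_const, tsum_mul_left,
    tsum_geometric_of_lt_one (by norm_num) (by norm_num)]
  push_cast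
  try ring

/-! ### van der Corput lemmas -/

lemma vdc_nonneg (n : ℕ) : 0 ≤ vdc 2 n := by
  apply Finset.sum_nonneg
  intro j _
  positivity

lemma vdc_zero : vdc 2 0 = 0 := by simp [vdc]

lemma vdc_eq_sum (n m : ℕ) (h : n + 1 ≤ m) :
    vdc 2 n = ∑ j ∈ Finset.range m, ((n / 2 ^ j % 2 : ℕ) : ℝ) / (2 : ℝ) ^ (j + 1) := by
  unfold vdc
  push_cast
  apply Finset.sum_subset (Finset.range_subset_range.2 h)
  intro j hj hnj
  have hjn : n + 1 ≤ j := by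
    simp only [Finset.mem_range, not_lt] at hnj
    exact hnj
  have : n < 2 ^ j := lt_of_lt_of_le (Nat.lt_two_pow_self) (Nat.pow_le_pow_right (by norm_num) (by omega))
  rw [Nat.div_eq_of_lt this]
  simp

lemma vdc_two_mul (n : ℕ) : vdc 2 (2 * n) = vdc 2 n / 2 := by
  rw [vdc_eq_sum (2 * n) (2 * n + 2) (by omega), Finset.sum_range_succ']
  have h0 : (2 * n / 2 ^ 0 % 2 : ℕ) = 0 := by omega
  rw [h0]
  have hterm : ∀ i : ℕ, ((2 * n / 2 ^ (i + 1) % 2 : ℕ) : ℝ) / (2 : ℝ) ^ (i + 1 + 1)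
      = (((n / 2 ^ i % 2 : ℕ) : ℝ) / (2 : ℝ) ^ (i + 1)) / 2 := by
    intro i
    have : 2 * n / 2 ^ (i + 1) = n / 2 ^ i := by
      rw [pow_succ, mul_comm (2 ^ i) 2, ← Nat.div_div_eq_div_mul, Nat.mul_div_cancel_left n (by norm_num)]
    rw [this, pow_succ]
    ring
  rw [Finset.sum_congr rfl (fun i _ => hterm i), ← Finset.sum_div,
    ← vdc_eq_sum n (2 * n + 1) (by omega)]
  simp

lemma vdc_two_mul_add_one (n : ℕ) : vdc 2 (2 * n + 1) = vdc 2 n / 2 + 1 / 2 := by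
  rw [vdc_eq_sum (2 * n + 1) (2 * n + 2) (by omega), Finset.sum_range_succ']
  have h0 : ((2 * n + 1) / 2 ^ 0 % 2 : ℕ) = 1 := by omega
  rw [h0]
  have hterm : ∀ i : ℕ, (((2 * n + 1) / 2 ^ (i + 1) % 2 : ℕ) : ℝ) / (2 : ℝ) ^ (i + 1 + 1)
      = (((n / 2 ^ i % 2 : ℕ) : ℝ) / (2 : ℝ) ^ (i + 1)) / 2 := by
    intro i
    have : (2 * n + 1) / 2 ^ (i + 1) = n / 2 ^ i := by
      rw [pow_succ, mul_comm (2 ^ i) 2, ← Nat.div_div_eq_div_mul]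
      congr 1
      omega
    rw [this, pow_succ]
    ring
  rw [Finset.sum_congr rfl (fun i _ => hterm i), ← Finset.sum_div,
    ← vdc_eq_sum n (2 * n + 1) (by omega)]
  norm_num

lemma vdc_lt_one (n : ℕ) : vdc 2 n < 1 := by
  have hle : vdc 2 n ≤ ∑ j ∈ Finset.range (n + 1), (1 / 2 : ℝ) ^ (j + 1) := by
    apply Finset.sum_le_sum
    intro j _
    have h1 : ((n / 2 ^ j % 2 : ℕ) : ℝ) ≤ 1 := by
      exact_mod_cast Nat.lt_succ_iff.mp (Nat.mod_lt _ (by norm_num))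
    rw [div_pow, one_pow]
    gcongr
    norm_num
  have hg : ∑ j ∈ Finset.range (n + 1), (1 / 2 : ℝ) ^ (j + 1) = 1 - (1 / 2) ^ (n + 1) := by
    have hgeom := geom_sum_eq (by norm_num : (1 / 2 : ℝ) ≠ 1) (n + 1)
    have h2 : ∑ j ∈ Finset.range (n + 1), (1 / 2 : ℝ) ^ (j + 1)
        = (∑ j ∈ Finset.range (n + 1), (1 / 2 : ℝ) ^ j) * (1 / 2) := by
      rw [Finset.sum_mul]
      exact Finset.sum_congr rfl fun j _ => by rw [pow_succ]
    rw [h2, hgeom]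
    have hpow : (0:ℝ) < (1/2)^(n+1) := by positivity
    field_simp
    ring
  have hpos : (0 : ℝ) < (1 / 2) ^ (n + 1) := by positivity
  rw [hg] at hle
  linarith

/-! ### Counting function -/

/-- The counting function, as a real number. -/
noncomputable def cnt (N : ℕ) (t : ℝ) : ℝ :=
  (((Finset.range N).filter (fun n => vdc 2 n ∈ Set.Ico (0 : ℝ) t)).card : ℝ)

/-- `N` times the local discrepancy, without normalisation. -/
noncomputable def E (N : ℕ) (t : ℝ) : ℝ := cnt N t - N * t

lemma cnt_eq_sum (N : ℕ) (t : ℝ) :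
    cnt N t = ∑ n ∈ Finset.range N, (if vdc 2 n < t then (1 : ℝ) else 0) := by
  unfold cnt
  rw [Finset.natCast_card_filter]
  apply Finset.sum_congr rfl
  intro n _
  congr 1
  simp [Set.mem_Ico, vdc_nonneg n]

lemma cnt_nonneg (N : ℕ) (t : ℝ) : 0 ≤ cnt N t := Nat.cast_nonneg _

lemma cnt_le (N : ℕ) (t : ℝ) : cnt N t ≤ N := by
  unfold cnt
  exact_mod_cast (Finset.card_filter_le _ _).trans (le_of_eq (Finset.card_range N))

lemma cnt_of_nonpos (N : ℕ) {t : ℝ} (h : t ≤ 0) : cnt N t = 0 := by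
  rw [cnt_eq_sum]
  apply Finset.sum_eq_zero
  intro n _
  have := vdc_nonneg n
  rw [if_neg (by linarith)]

lemma cnt_of_one_le (N : ℕ) {t : ℝ} (h : 1 ≤ t) : cnt N t = N := by
  rw [cnt_eq_sum]
  rw [Finset.sum_congr rfl (fun n _ => if_pos (lt_of_lt_of_le (vdc_lt_one n) h))]
  simp

lemma cnt_succ (N : ℕ) (t : ℝ) :
    cnt (N + 1) t = cnt N t + (if vdc 2 N < t then (1 : ℝ) else 0) := by
  rw [cnt_eq_sum, cnt_eq_sum, Finset.sum_range_succ]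

lemma cnt_split (N : ℕ) (t : ℝ) :
    cnt N t = cnt ((N + 1) / 2) (2 * t) + cnt (N / 2) (2 * t - 1) := by
  induction N with
  | zero => simp [cnt_eq_sum]
  | succ N ih =>
    rcases Nat.even_or_odd N with ⟨k, hk⟩ | ⟨k, hk⟩
    · have h1 : N = 2 * k := by omega
      rw [cnt_succ N t, ih,
        show (N + 1 + 1) / 2 = k + 1 from by omega,
        show (N + 1) / 2 = k from by omega,
        show N / 2 = k from by omega,
        cnt_succ k (2 * t)]
      have hv : vdc 2 N = vdc 2 k / 2 := by rw [h1, vdc_two_mul]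
      have hiff : vdc 2 N < t ↔ vdc 2 k < 2 * t := by
        rw [hv]; constructor <;> intro <;> linarith
      simp only [hiff]
      ring
    · have h1 : N = 2 * k + 1 := by omega
      rw [cnt_succ N t, ih,
        show (N + 1 + 1) / 2 = k + 1 from by omega,
        show (N + 1) / 2 = k + 1 from by omega,
        show N / 2 = k from by omega,
        cnt_succ k (2 * t - 1)]
      have hv : vdc 2 N = vdc 2 k / 2 + 1 / 2 := by rw [h1, vdc_two_mul_add_one]
      have hiff : vdc 2 N < t ↔ vdc 2 k < 2 * t - 1 := by
        rw [hv]; constructor <;> intro <;> linarith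
      simp only [hiff]
      ring

lemma E_split_left (N : ℕ) {t : ℝ} (h : t ≤ 1 / 2) :
    E N t = E ((N + 1) / 2) (2 * t) + ((N % 2 : ℕ) : ℝ) * t := by
  have h2 : 2 * ((N + 1) / 2) = N + N % 2 := by omega
  have h2R : 2 * (((N + 1) / 2 : ℕ) : ℝ) = (N : ℝ) + ((N % 2 : ℕ) : ℝ) := by
    exact_mod_cast congrArg (Nat.cast : ℕ → ℝ) h2
  unfold E
  rw [cnt_split N t, cnt_of_nonpos (N / 2) (by linarith)]
  push_cast at h2R ⊢
  nlinarith [h2R]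

lemma E_split_right (N : ℕ) {t : ℝ} (h : 1 / 2 ≤ t) :
    E N t = E (N / 2) (2 * t - 1) + ((N % 2 : ℕ) : ℝ) * (1 - t) := by
  have h2 : 2 * (N / 2) + N % 2 = N := by omega
  have h3 : (N + 1) / 2 = N / 2 + N % 2 := by omega
  have h2R : 2 * ((N / 2 : ℕ) : ℝ) + ((N % 2 : ℕ) : ℝ) = (N : ℝ) := by
    exact_mod_cast congrArg (Nat.cast : ℕ → ℝ) h2
  have h3R : (((N + 1) / 2 : ℕ) : ℝ) = ((N / 2 : ℕ) : ℝ) + ((N % 2 : ℕ) : ℝ) := by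
    exact_mod_cast congrArg (Nat.cast : ℕ → ℝ) h3
  unfold E
  rw [cnt_split N t, cnt_of_one_le ((N + 1) / 2) (by linarith)]
  nlinarith [h2R, h3R]

/-! ### Integrability -/

open MeasureTheory intervalIntegral

lemma measurable_cnt (N : ℕ) : Measurable (cnt N) := by
  have h : cnt N = fun t => ∑ n ∈ Finset.range N, (if vdc 2 n < t then (1 : ℝ) else 0) :=
    funext fun t => cnt_eq_sum N t
  rw [h]
  apply Finset.measurable_sum
  intro n _
  exact Measurable.ite measurableSet_Ioi measurable_const measurable_const

lemma measurable_E (N : ℕ) : Measurable (E N) := by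
  have h : E N = fun t => cnt N t - (N : ℝ) * t := rfl
  rw [h]
  exact (measurable_cnt N).sub (measurable_const.mul measurable_id)

lemma II_of_bdd {f : ℝ → ℝ} {a b : ℝ} (hf : Measurable f) (C : ℝ)
    (h : ∀ t ∈ Set.uIcc a b, |f t| ≤ C) :
    IntervalIntegrable f MeasureTheory.volume a b := by
  apply IntervalIntegrable.mono_fun' (g := fun _ => C) intervalIntegrable_const
    hf.aestronglyMeasurable.restrict
  filter_upwards [MeasureTheory.ae_restrict_mem measurableSet_uIoc] with t ht
  rw [Real.norm_eq_abs]
  exact h t (Set.uIoc_subset_uIcc ht)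

lemma abs_E_le (N : ℕ) (t : ℝ) : |E N t| ≤ (N : ℝ) + (N : ℝ) * |t| := by
  unfold E
  have h1 := cnt_nonneg N t
  have h2 := cnt_le N t
  have h3 : |(N : ℝ) * t| = (N : ℝ) * |t| := by
    rw [abs_mul, Nat.abs_cast]
  calc |cnt N t - (N : ℝ) * t| ≤ |cnt N t| + |(N : ℝ) * t| := by
        rw [sub_eq_add_neg]
        exact (abs_add_le _ _).trans (by rw [abs_neg])
    _ ≤ (N : ℝ) + (N : ℝ) * |t| := by
        rw [h3, abs_of_nonneg h1]
        linarith
  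
lemma II_gen {g : ℝ → ℝ} (hg : Measurable g) (Cg : ℝ)
    (hCg : ∀ t ∈ Set.Icc (-2 : ℝ) 2, |g t| ≤ Cg) {a b : ℝ}
    (hab : Set.uIcc a b ⊆ Set.Icc (-2 : ℝ) 2) :
    IntervalIntegrable g MeasureTheory.volume a b :=
  II_of_bdd hg Cg fun t ht => hCg t (hab ht)

lemma abs_t_le {t : ℝ} (ht : t ∈ Set.Icc (-2 : ℝ) 2) : |t| ≤ 2 := abs_le.mpr ⟨ht.1, ht.2⟩

lemma IIE (N : ℕ) {a b : ℝ} (hab : Set.uIcc a b ⊆ Set.Icc (-2 : ℝ) 2) :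
    IntervalIntegrable (E N) MeasureTheory.volume a b := by
  apply II_gen (measurable_E N) (3 * (N : ℝ)) ?_ hab
  intro t ht
  have h1 := abs_E_le N t
  have h2 := abs_t_le ht
  have h3 : (0 : ℝ) ≤ N := Nat.cast_nonneg N
  nlinarith

lemma IIEt (N : ℕ) {a b : ℝ} (hab : Set.uIcc a b ⊆ Set.Icc (-2 : ℝ) 2) :
    IntervalIntegrable (fun t => t * E N t) MeasureTheory.volume a b := by
  apply II_gen (measurable_id.mul (measurable_E N)) (6 * (N : ℝ)) ?_ hab
  intro t ht
  have h1 := abs_E_le N t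
  have h2 := abs_t_le ht
  have h3 : (0 : ℝ) ≤ N := Nat.cast_nonneg N
  have h4 := abs_nonneg (E N t)
  have h5 : |E N t| ≤ 3 * (N : ℝ) := by nlinarith
  rw [Pi.mul_apply, abs_mul]
  simp only [id_eq]
  calc |t| * |E N t| ≤ 2 * (3 * (N : ℝ)) := mul_le_mul h2 h5 h4 (by norm_num)
    _ = 6 * (N : ℝ) := by ring

lemma IIEsq (N : ℕ) {a b : ℝ} (hab : Set.uIcc a b ⊆ Set.Icc (-2 : ℝ) 2) :
    IntervalIntegrable (fun t => (E N t) ^ 2) MeasureTheory.volume a b := by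
  apply II_gen ((measurable_E N).pow_const 2) (9 * (N : ℝ) ^ 2) ?_ hab
  intro t ht
  have h1 := abs_E_le N t
  have h2 := abs_t_le ht
  have h3 : (0 : ℝ) ≤ N := Nat.cast_nonneg N
  have h4 := abs_nonneg (E N t)
  have h5 : |E N t| ≤ 3 * (N : ℝ) := by nlinarith
  rw [abs_pow, pow_two]
  calc |E N t| * |E N t| ≤ (3 * (N : ℝ)) * (3 * (N : ℝ)) :=
        mul_le_mul h5 h5 h4 (by positivity)
    _ = 9 * (N : ℝ) ^ 2 := by ring

lemma measurable_Ec1 (M : ℕ) : Measurable (fun t : ℝ => E M (2 * t)) :=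
  (measurable_E M).comp (measurable_id.const_mul 2)

lemma measurable_Ec2 (M : ℕ) : Measurable (fun t : ℝ => E M (2 * t - 1)) :=
  (measurable_E M).comp ((measurable_id.const_mul 2).sub measurable_const)

lemma abs_Ec1_le (M : ℕ) {t : ℝ} (ht : t ∈ Set.Icc (-2 : ℝ) 2) : |E M (2 * t)| ≤ 5 * M := by
  have h1 := abs_E_le M (2 * t)
  have h2 := abs_t_le ht
  have h3 : (0 : ℝ) ≤ M := Nat.cast_nonneg M
  have h4 : |2 * t| = 2 * |t| := by rw [abs_mul]; norm_num
  nlinarith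

lemma abs_Ec2_le (M : ℕ) {t : ℝ} (ht : t ∈ Set.Icc (-2 : ℝ) 2) : |E M (2 * t - 1)| ≤ 6 * M := by
  have h1 := abs_E_le M (2 * t - 1)
  have h2 := abs_t_le ht
  have h3 : (0 : ℝ) ≤ M := Nat.cast_nonneg M
  have h4 : |2 * t - 1| ≤ 5 := by
    have := abs_le.mp h2
    rw [abs_le]
    constructor <;> linarith [this.1, this.2]
  nlinarith

lemma IIc1 (M : ℕ) {a b : ℝ} (hab : Set.uIcc a b ⊆ Set.Icc (-2 : ℝ) 2) :
    IntervalIntegrable (fun t => E M (2 * t)) MeasureTheory.volume a b :=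
  II_gen (measurable_Ec1 M) (5 * M) (fun t ht => abs_Ec1_le M ht) hab

lemma IIc1t (M : ℕ) {a b : ℝ} (hab : Set.uIcc a b ⊆ Set.Icc (-2 : ℝ) 2) :
    IntervalIntegrable (fun t => t * E M (2 * t)) MeasureTheory.volume a b := by
  apply II_gen (measurable_id.mul (measurable_Ec1 M)) (10 * M) ?_ hab
  intro t ht
  have h1 := abs_Ec1_le M ht
  have h2 := abs_t_le ht
  have h3 : (0 : ℝ) ≤ M := Nat.cast_nonneg M
  have h4 := abs_nonneg (E M (2 * t))
  rw [Pi.mul_apply, abs_mul]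
  simp only [id_eq]
  calc |t| * |E M (2 * t)| ≤ 2 * (5 * (M : ℝ)) := mul_le_mul h2 h1 h4 (by norm_num)
    _ = 10 * (M : ℝ) := by ring

lemma IIc1sq (M : ℕ) {a b : ℝ} (hab : Set.uIcc a b ⊆ Set.Icc (-2 : ℝ) 2) :
    IntervalIntegrable (fun t => (E M (2 * t)) ^ 2) MeasureTheory.volume a b := by
  apply II_gen ((measurable_Ec1 M).pow_const 2) (25 * (M : ℝ) ^ 2) ?_ hab
  intro t ht
  have h1 := abs_Ec1_le M ht
  have h3 : (0 : ℝ) ≤ M := Nat.cast_nonneg M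
  have h4 := abs_nonneg (E M (2 * t))
  rw [abs_pow, pow_two]
  calc |E M (2 * t)| * |E M (2 * t)| ≤ (5 * (M : ℝ)) * (5 * (M : ℝ)) :=
        mul_le_mul h1 h1 h4 (by positivity)
    _ = 25 * (M : ℝ) ^ 2 := by ring

lemma IIc2 (M : ℕ) {a b : ℝ} (hab : Set.uIcc a b ⊆ Set.Icc (-2 : ℝ) 2) :
    IntervalIntegrable (fun t => E M (2 * t - 1)) MeasureTheory.volume a b :=
  II_gen (measurable_Ec2 M) (6 * M) (fun t ht => abs_Ec2_le M ht) hab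

lemma IIc2t (M : ℕ) {a b : ℝ} (hab : Set.uIcc a b ⊆ Set.Icc (-2 : ℝ) 2) :
    IntervalIntegrable (fun t => (1 - t) * E M (2 * t - 1)) MeasureTheory.volume a b := by
  apply II_gen ((measurable_const.sub measurable_id).mul (measurable_Ec2 M)) (18 * M) ?_ hab
  intro t ht
  have h1 := abs_Ec2_le M ht
  have h2 := abs_t_le ht
  have h3 : (0 : ℝ) ≤ M := Nat.cast_nonneg M
  have h4 := abs_nonneg (E M (2 * t - 1))
  have h5 : |1 - t| ≤ 3 := by
    have := abs_le.mp h2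
    rw [abs_le]
    constructor <;> linarith [this.1, this.2]
  have h6 := abs_nonneg (1 - t)
  rw [Pi.mul_apply, abs_mul]
  simp only [id_eq, Pi.sub_apply]
  calc |1 - t| * |E M (2 * t - 1)| ≤ 3 * (6 * (M : ℝ)) := mul_le_mul h5 h1 h4 (by norm_num)
    _ = 18 * (M : ℝ) := by ring

lemma IIc2sq (M : ℕ) {a b : ℝ} (hab : Set.uIcc a b ⊆ Set.Icc (-2 : ℝ) 2) :
    IntervalIntegrable (fun t => (E M (2 * t - 1)) ^ 2) MeasureTheory.volume a b := by
  apply II_gen ((measurable_Ec2 M).pow_const 2) (36 * (M : ℝ) ^ 2) ?_ hab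
  intro t ht
  have h1 := abs_Ec2_le M ht
  have h3 : (0 : ℝ) ≤ M := Nat.cast_nonneg M
  have h4 := abs_nonneg (E M (2 * t - 1))
  rw [abs_pow, pow_two]
  calc |E M (2 * t - 1)| * |E M (2 * t - 1)| ≤ (6 * (M : ℝ)) * (6 * (M : ℝ)) :=
        mul_le_mul h1 h1 h4 (by positivity)
    _ = 36 * (M : ℝ) ^ 2 := by ring

lemma IIind (y : ℝ) {a b : ℝ} :
    IntervalIntegrable (fun t => if y < t then (1 : ℝ) else 0) MeasureTheory.volume a b := by
  apply II_of_bdd (Measurable.ite measurableSet_Ioi measurable_const measurable_const) 1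
  intro t _
  split <;> norm_num

lemma IIindt (y : ℝ) {a b : ℝ} (hab : Set.uIcc a b ⊆ Set.Icc (-2 : ℝ) 2) :
    IntervalIntegrable (fun t => t * (if y < t then (1 : ℝ) else 0)) MeasureTheory.volume a b := by
  apply II_gen (measurable_id.mul
    (Measurable.ite measurableSet_Ioi measurable_const measurable_const)) 2 ?_ hab
  intro t ht
  have h2 := abs_t_le ht
  rw [Pi.mul_apply, abs_mul]
  split <;> simp <;> nlinarith [abs_nonneg t]

lemma hsub01 : Set.uIcc (0 : ℝ) 1 ⊆ Set.Icc (-2 : ℝ) 2 := by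
  rw [Set.uIcc_of_le (by norm_num)]
  apply Set.Icc_subset_Icc <;> norm_num

lemma hsubL : Set.uIcc (0 : ℝ) (1 / 2) ⊆ Set.Icc (-2 : ℝ) 2 := by
  rw [Set.uIcc_of_le (by norm_num)]
  apply Set.Icc_subset_Icc <;> norm_num

lemma hsubR : Set.uIcc (1 / 2 : ℝ) 1 ⊆ Set.Icc (-2 : ℝ) 2 := by
  rw [Set.uIcc_of_le (by norm_num)]
  apply Set.Icc_subset_Icc <;> norm_num

/-! ### The integrals I, J, K -/

noncomputable def Iv (N : ℕ) : ℝ := ∫ t in (0:ℝ)..1, E N t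
noncomputable def Jv (N : ℕ) : ℝ := ∫ t in (0:ℝ)..1, t * E N t
noncomputable def Kv (N : ℕ) : ℝ := ∫ t in (0:ℝ)..1, (E N t) ^ 2

lemma E_zero (t : ℝ) : E 0 t = 0 := by
  unfold E cnt
  simp

lemma Iv_zero : Iv 0 = 0 := by
  unfold Iv
  rw [integral_congr (g := fun _ => (0:ℝ)) (fun t _ => E_zero t)]
  simp

lemma Kv_zero : Kv 0 = 0 := by
  unfold Kv
  rw [integral_congr (g := fun _ => (0:ℝ)) (fun t _ => by rw [E_zero]; norm_num)]
  simp

lemma E_one (t : ℝ) : E 1 t = (if (0:ℝ) < t then (1:ℝ) else 0) - t := by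
  unfold E
  rw [cnt_eq_sum]
  rw [Finset.sum_range_one, vdc_zero]
  push_cast
  ring

lemma integral_ind {y : ℝ} (hy0 : 0 ≤ y) (hy1 : y ≤ 1) :
    ∫ t in (0:ℝ)..1, (if y < t then (1:ℝ) else 0) = 1 - y := by
  rw [← integral_add_adjacent_intervals (b := y) (IIind y) (IIind y)]
  have h1 : ∫ t in (0:ℝ)..y, (if y < t then (1:ℝ) else 0) = 0 := by
    rw [integral_congr (g := fun _ => (0:ℝ)) ?_]
    · simp
    · intro t ht
      rw [Set.uIcc_of_le hy0] at ht
      exact if_neg (not_lt.2 ht.2)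
  have h2 : ∫ t in y..1, (if y < t then (1:ℝ) else 0) = 1 - y := by
    rw [intervalIntegral.integral_congr_ae (g := fun _ => (1:ℝ)) ?_, intervalIntegral.integral_const]
    · simp
    · filter_upwards with t ht
      rw [Set.uIoc_of_le hy1] at ht
      exact if_pos ht.1
  rw [h1, h2]
  ring

lemma integral_ind_t {y : ℝ} (hy0 : 0 ≤ y) (hy1 : y ≤ 1) :
    ∫ t in (0:ℝ)..1, t * (if y < t then (1:ℝ) else 0) = (1 - y^2) / 2 := by
  rw [← integral_add_adjacent_intervals (b := y)
    (IIindt y (by rw [Set.uIcc_of_le hy0]; apply Set.Icc_subset_Icc <;> linarith))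
    (IIindt y (by rw [Set.uIcc_of_le hy1]; apply Set.Icc_subset_Icc <;> linarith))]
  have h1 : ∫ t in (0:ℝ)..y, t * (if y < t then (1:ℝ) else 0) = 0 := by
    rw [integral_congr (g := fun _ => (0:ℝ)) ?_]
    · simp
    · intro t ht
      rw [Set.uIcc_of_le hy0] at ht
      show t * (if y < t then (1:ℝ) else 0) = 0
      rw [if_neg (not_lt.2 ht.2)]
      ring
  have h2 : ∫ t in y..1, t * (if y < t then (1:ℝ) else 0) = (1 - y^2) / 2 := by
    rw [intervalIntegral.integral_congr_ae (g := fun t => t) ?_, integral_id]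
    · ring
    · filter_upwards with t ht
      rw [Set.uIoc_of_le hy1] at ht
      rw [if_pos ht.1]
      ring
  rw [h1, h2]
  ring

lemma Iv_one : Iv 1 = 1 / 2 := by
  unfold Iv
  rw [integral_congr (g := fun t => (if (0:ℝ) < t then (1:ℝ) else 0) - t) (fun t _ => E_one t),
    integral_sub (IIind 0) ((continuous_id').intervalIntegrable _ _),
    integral_ind le_rfl (by norm_num), integral_id]
  norm_num

lemma Kv_one : Kv 1 = 1 / 3 := by
  unfold Kv
  rw [intervalIntegral.integral_congr_ae (g := fun t => (1 - t)^2) ?_]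
  · rw [integral_comp_sub_left (fun u => u ^ 2) 1]
    norm_num
  · filter_upwards with t ht
    rw [Set.uIoc_of_le (by norm_num : (0:ℝ) ≤ 1)] at ht
    rw [E_one, if_pos ht.1]

lemma Iv_succ (N : ℕ) : Iv (N + 1) = Iv N + 1 / 2 - vdc 2 N := by
  have hy0 := vdc_nonneg N
  have hy1 := (vdc_lt_one N).le
  have hpt : ∀ t : ℝ, E (N + 1) t = E N t + ((if vdc 2 N < t then (1:ℝ) else 0) - t) := by
    intro t
    unfold E
    rw [cnt_succ]
    push_cast
    ring
  unfold Iv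
  rw [integral_congr (g := fun t => E N t + ((if vdc 2 N < t then (1:ℝ) else 0) - t))
      (fun t _ => hpt t),
    integral_add (IIE N hsub01) ((IIind _).sub ((continuous_id').intervalIntegrable _ _)),
    integral_sub (IIind _) ((continuous_id').intervalIntegrable _ _),
    integral_ind hy0 hy1, integral_id]
  have e : (∫ t in (0:ℝ)..1, E N t) = Iv N := rfl
  rw [e]
  norm_num
  try ring

lemma Jv_succ (N : ℕ) : Jv (N + 1) = Jv N + 1 / 6 - (vdc 2 N) ^ 2 / 2 := by
  have hy0 := vdc_nonneg N
  have hy1 := (vdc_lt_one N).le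
  have hpt : ∀ t : ℝ, t * E (N + 1) t
      = t * E N t + (t * (if vdc 2 N < t then (1:ℝ) else 0) - t ^ 2) := by
    intro t
    unfold E
    rw [cnt_succ]
    push_cast
    ring
  unfold Jv
  rw [integral_congr (g := fun t => t * E N t
        + (t * (if vdc 2 N < t then (1:ℝ) else 0) - t ^ 2)) (fun t _ => hpt t),
    integral_add (IIEt N hsub01) ((IIindt _ hsub01).sub
      ((continuous_pow 2).intervalIntegrable _ _)),
    integral_sub (IIindt _ hsub01) ((continuous_pow 2).intervalIntegrable _ _),
    integral_ind_t hy0 hy1, integral_pow]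
  have e : (∫ t in (0:ℝ)..1, t * E N t) = Jv N := rfl
  rw [e]
  norm_num
  try ring

lemma int_lin1 (d : ℝ) : ∫ t in (0:ℝ)..(1/2), d * t = d / 8 := by
  rw [intervalIntegral.integral_const_mul, integral_id]
  norm_num
  ring

lemma int_lin2 (d : ℝ) : ∫ t in (1/2:ℝ)..1, d * (1 - t) = d / 8 := by
  rw [intervalIntegral.integral_const_mul,
    integral_sub ((continuous_const).intervalIntegrable _ _) ((continuous_id').intervalIntegrable _ _),
    intervalIntegral.integral_const, integral_id]
  norm_num
  ring

lemma int_sq1 : ∫ t in (0:ℝ)..(1/2), t ^ 2 = 1 / 24 := by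
  rw [integral_pow]
  norm_num

lemma int_sq2 : ∫ t in (1/2:ℝ)..1, (1 - t) ^ 2 = 1 / 24 := by
  have h : ∀ t : ℝ, (1 - t) ^ 2 = 1 - 2 * t + t ^ 2 := fun t => by ring
  rw [integral_congr (g := fun t => 1 - 2 * t + t ^ 2) (fun t _ => h t),
    integral_add ((((continuous_const).intervalIntegrable _ _).sub
      ((continuous_const.fun_mul continuous_id').intervalIntegrable _ _)))
      ((continuous_pow 2).intervalIntegrable _ _),
    integral_sub ((continuous_const).intervalIntegrable _ _)
      ((continuous_const.fun_mul continuous_id').intervalIntegrable _ _),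
    intervalIntegral.integral_const, intervalIntegral.integral_const_mul, integral_id, integral_pow]
  norm_num

lemma int_comp_E1 (M : ℕ) : (∫ t in (0:ℝ)..(1/2), E M (2 * t)) = Iv M / 2 := by
  rw [integral_comp_mul_left (fun u => E M u) (by norm_num : (2:ℝ) ≠ 0)]
  norm_num
  rw [show (∫ x in (0:ℝ)..1, E M x) = Iv M from rfl]
  ring

lemma int_comp_E2 (M : ℕ) : (∫ t in (1/2:ℝ)..1, E M (2 * t - 1)) = Iv M / 2 := by
  rw [integral_comp_mul_sub (fun u => E M u) (by norm_num : (2:ℝ) ≠ 0) 1]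
  norm_num
  rw [show (∫ x in (0:ℝ)..1, E M x) = Iv M from rfl]
  ring

lemma int_comp_Esq1 (M : ℕ) : (∫ t in (0:ℝ)..(1/2), (E M (2 * t)) ^ 2) = Kv M / 2 := by
  rw [integral_comp_mul_left (fun u => (E M u) ^ 2) (by norm_num : (2:ℝ) ≠ 0)]
  norm_num
  rw [show (∫ x in (0:ℝ)..1, (E M x) ^ 2) = Kv M from rfl]
  ring

lemma int_comp_Esq2 (M : ℕ) : (∫ t in (1/2:ℝ)..1, (E M (2 * t - 1)) ^ 2) = Kv M / 2 := by
  rw [integral_comp_mul_sub (fun u => (E M u) ^ 2) (by norm_num : (2:ℝ) ≠ 0) 1]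
  norm_num
  rw [show (∫ x in (0:ℝ)..1, (E M x) ^ 2) = Kv M from rfl]
  ring

lemma int_comp_tE (M : ℕ) : (∫ t in (0:ℝ)..(1/2), t * E M (2 * t)) = Jv M / 4 := by
  have hgj : ∀ t : ℝ, t * E M (2 * t) = (fun u => u * E M u / 2) (2 * t) := fun t => by
    show t * E M (2 * t) = 2 * t * E M (2 * t) / 2
    ring
  rw [integral_congr (g := fun t => (fun u => u * E M u / 2) (2 * t)) (fun t _ => hgj t),
    integral_comp_mul_left (fun u => u * E M u / 2) (by norm_num : (2:ℝ) ≠ 0)]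
  norm_num
  rw [show (∫ x in (0:ℝ)..1, x * E M x) = Jv M from rfl]
  ring

lemma int_comp_tE2 (M : ℕ) :
    (∫ t in (1/2:ℝ)..1, (1 - t) * E M (2 * t - 1)) = (Iv M - Jv M) / 4 := by
  have hgj : ∀ t : ℝ, (1 - t) * E M (2 * t - 1)
      = (fun u => (1 - u) * E M u / 2) (2 * t - 1) := fun t => by
    show (1 - t) * E M (2 * t - 1) = (1 - (2 * t - 1)) * E M (2 * t - 1) / 2
    ring
  rw [integral_congr (g := fun t => (fun u => (1 - u) * E M u / 2) (2 * t - 1))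
      (fun t _ => hgj t),
    integral_comp_mul_sub (fun u => (1 - u) * E M u / 2) (by norm_num : (2:ℝ) ≠ 0) 1]
  norm_num
  rw [integral_congr (g := fun u => E M u - u * E M u) (fun u _ => by ring),
    integral_sub (IIE M hsub01) (IIEt M hsub01),
    show (∫ x in (0:ℝ)..1, x * E M x) = Jv M from rfl,
    show (∫ x in (0:ℝ)..1, E M x) = Iv M from rfl]
  ring

lemma Iv_rec (N : ℕ) :
    Iv N = (Iv ((N + 1) / 2) + Iv (N / 2)) / 2 + ((N % 2 : ℕ) : ℝ) / 4 := by
  set M' := (N + 1) / 2 with hM'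
  set M := N / 2 with hM
  set d : ℝ := ((N % 2 : ℕ) : ℝ) with hd
  have hsplit : Iv N = (∫ t in (0:ℝ)..(1/2), E N t) + ∫ t in (1/2:ℝ)..1, E N t :=
    (integral_add_adjacent_intervals (IIE N hsubL) (IIE N hsubR)).symm
  have hL : (∫ t in (0:ℝ)..(1/2), E N t)
      = (∫ t in (0:ℝ)..(1/2), E M' (2 * t)) + ∫ t in (0:ℝ)..(1/2), d * t := by
    rw [← integral_add (IIc1 M' hsubL)
      ((continuous_const.fun_mul continuous_id').intervalIntegrable _ _)]
    apply integral_congr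
    intro t ht
    rw [Set.uIcc_of_le (by norm_num : (0:ℝ) ≤ 1/2)] at ht
    exact E_split_left N ht.2
  have hR : (∫ t in (1/2:ℝ)..1, E N t)
      = (∫ t in (1/2:ℝ)..1, E M (2 * t - 1)) + ∫ t in (1/2:ℝ)..1, d * (1 - t) := by
    rw [← integral_add (IIc2 M hsubR)
      ((continuous_const.fun_mul (continuous_const.fun_sub continuous_id')).intervalIntegrable _ _)]
    apply integral_congr
    intro t ht
    rw [Set.uIcc_of_le (by norm_num : (1/2:ℝ) ≤ 1)] at ht
    exact E_split_right N ht.1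
  rw [hsplit, hL, hR, int_comp_E1 M', int_comp_E2 M, int_lin1 d, int_lin2 d]
  ring

lemma Kv_rec (N : ℕ) :
    Kv N = (Kv ((N + 1) / 2) + Kv (N / 2)) / 2
      + ((N % 2 : ℕ) : ℝ) * ((Jv ((N + 1) / 2) - Jv (N / 2)) / 2 + Iv (N / 2) / 2 + 1 / 12) := by
  set M' := (N + 1) / 2 with hM'
  set M := N / 2 with hM
  set d : ℝ := ((N % 2 : ℕ) : ℝ) with hd
  have hd2 : d ^ 2 = d := by
    rcases Nat.mod_two_eq_zero_or_one N with h | h <;> rw [hd, h] <;> norm_num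
  have hsplit : Kv N = (∫ t in (0:ℝ)..(1/2), (E N t) ^ 2)
      + ∫ t in (1/2:ℝ)..1, (E N t) ^ 2 :=
    (integral_add_adjacent_intervals (IIEsq N hsubL) (IIEsq N hsubR)).symm
  have hL : (∫ t in (0:ℝ)..(1/2), (E N t) ^ 2)
      = (∫ t in (0:ℝ)..(1/2), (E M' (2 * t)) ^ 2)
        + ∫ t in (0:ℝ)..(1/2), (d * (2 * (t * E M' (2 * t))) + d * t ^ 2) := by
    rw [← integral_add (IIc1sq M' hsubL)
      ((((IIc1t M' hsubL).const_mul 2).const_mul d).add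
        ((continuous_const.fun_mul (continuous_pow 2)).intervalIntegrable _ _))]
    apply integral_congr
    intro t ht
    rw [Set.uIcc_of_le (by norm_num : (0:ℝ) ≤ 1/2)] at ht
    show E N t ^ 2 = E M' (2 * t) ^ 2 + (d * (2 * (t * E M' (2 * t))) + d * t ^ 2)
    rw [E_split_left N ht.2]
    linear_combination (t ^ 2) * hd2
  have hR : (∫ t in (1/2:ℝ)..1, (E N t) ^ 2)
      = (∫ t in (1/2:ℝ)..1, (E M (2 * t - 1)) ^ 2)
        + ∫ t in (1/2:ℝ)..1, (d * (2 * ((1 - t) * E M (2 * t - 1))) + d * (1 - t) ^ 2) := by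
    rw [← integral_add (IIc2sq M hsubR)
      ((((IIc2t M hsubR).const_mul 2).const_mul d).add
        ((continuous_const.fun_mul ((continuous_const.fun_sub continuous_id').fun_pow 2)).intervalIntegrable _ _))]
    apply integral_congr
    intro t ht
    rw [Set.uIcc_of_le (by norm_num : (1/2:ℝ) ≤ 1)] at ht
    show E N t ^ 2 = E M (2 * t - 1) ^ 2 + (d * (2 * ((1 - t) * E M (2 * t - 1))) + d * (1 - t) ^ 2)
    rw [E_split_right N ht.1]
    linear_combination ((1 - t) ^ 2) * hd2
  have hL2 : (∫ t in (0:ℝ)..(1/2), (d * (2 * (t * E M' (2 * t))) + d * t ^ 2))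
      = d * (2 * (Jv M' / 4)) + d * (1 / 24) := by
    rw [integral_add (((IIc1t M' hsubL).const_mul 2).const_mul d)
        ((continuous_const.fun_mul (continuous_pow 2)).intervalIntegrable _ _),
      intervalIntegral.integral_const_mul, intervalIntegral.integral_const_mul, intervalIntegral.integral_const_mul, int_comp_tE M', int_sq1]
  have hR2 : (∫ t in (1/2:ℝ)..1, (d * (2 * ((1 - t) * E M (2 * t - 1))) + d * (1 - t) ^ 2))
      = d * (2 * ((Iv M - Jv M) / 4)) + d * (1 / 24) := by
    rw [integral_add (((IIc2t M hsubR).const_mul 2).const_mul d)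
        ((continuous_const.fun_mul ((continuous_const.fun_sub continuous_id').fun_pow 2)).intervalIntegrable _ _),
      intervalIntegral.integral_const_mul, intervalIntegral.integral_const_mul, intervalIntegral.integral_const_mul, int_comp_tE2 M, int_sq2]
  rw [hsplit, hL, hR, hL2, hR2, int_comp_Esq1 M', int_comp_Esq2 M]
  ring

theorem main (N : ℕ) : Iv N = S N / 2 ∧ Kv N = (S N ^ 2 + Q N) / 4 := by
  induction N using Nat.strong_induction_on with
  | _ N ih =>
  rcases Nat.lt_or_ge N 2 with h2 | h2
  · interval_cases N
    · exact ⟨by rw [Iv_zero, S_zero]; norm_num, by rw [Kv_zero, S_zero, Q_zero]; norm_num⟩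
    · have hS1 : S 1 = 1 := by
        have h := S_odd 0
        rw [S_zero] at h
        norm_num at h
        linarith
      have hQ1 : Q 1 = 1 / 3 := by
        have h := Q_odd 0
        rw [Q_zero] at h
        norm_num at h
        linarith
      exact ⟨by rw [Iv_one, hS1], by rw [Kv_one, hS1, hQ1]; norm_num⟩
  · set M := N / 2 with hMdef
    rcases Nat.mod_two_eq_zero_or_one N with hpar | hpar
    · -- even case
      have hN : N = 2 * M := by omega
      have hM' : (N + 1) / 2 = M := by omega
      obtain ⟨ihI, ihK⟩ := ih M (by omega)
      have hrecI := Iv_rec N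
      have hrecK := Kv_rec N
      rw [hM', hpar] at hrecI hrecK
      push_cast at hrecI hrecK
      have hSN : S N = S M := by rw [hN, S_even]
      have hQN : Q N = Q M := by rw [hN, Q_even]
      constructor
      · rw [hrecI, ihI, hSN]
        ring
      · rw [hrecK, ihK, hSN, hQN]
        ring
    · -- odd case
      have hN : N = 2 * M + 1 := by omega
      have hM' : (N + 1) / 2 = M + 1 := by omega
      obtain ⟨ihI, ihK⟩ := ih M (by omega)
      obtain ⟨ihI1, ihK1⟩ := ih (M + 1) (by omega)
      have hIs : Iv (M + 1) = Iv M + 1 / 2 - vdc 2 M := Iv_succ M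
      have hJs : Jv (M + 1) = Jv M + 1 / 6 - (vdc 2 M) ^ 2 / 2 := Jv_succ M
      have hS1 : S (M + 1) = S M + 1 - 2 * vdc 2 M := by
        have h := ihI1
        rw [hIs, ihI] at h
        linarith
      have hSN : S N = (S M + S (M + 1)) / 2 + 1 / 2 := by rw [hN]; exact S_odd M
      have hQN : Q N = (Q M + Q (M + 1)) / 2 + 1 / 6 := by rw [hN]; exact Q_odd M
      have hrecI := Iv_rec N
      have hrecK := Kv_rec N
      rw [hM', hpar] at hrecI hrecK
      push_cast at hrecI hrecK
      constructor
      · rw [hrecI, ihI1, ihI, hSN, hS1]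
        ring
      · rw [hrecK, ihK1, ihK, hJs, ihI, hSN, hQN, hS1]
        ring

end Faure

/-- Faure's formula:
`4 (N L_{2,N}(Y₂))² = (∑_{j ≥ 1} ‖N / 2 ^ j‖)² + ∑_{j ≥ 1} ‖N / 2 ^ j‖²`. -/
theorem vdc_L2_formula (N : ℕ) (hN : 1 ≤ N) :
    4 * ((N : ℝ) * L2disc (vdc 2) N) ^ 2 =
      (∑' j : ℕ, nint ((N : ℝ) / 2 ^ (j + 1))) ^ 2 +
        ∑' j : ℕ, (nint ((N : ℝ) / 2 ^ (j + 1))) ^ 2 := by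
  have hmain := (Faure.main N).2
  have hX : (0:ℝ) ≤ ∫ t in (0:ℝ)..1, (ldisc (vdc 2) N t) ^ 2 :=
    intervalIntegral.integral_nonneg (by norm_num) (fun u _ => sq_nonneg _)
  have hNne : (N : ℝ) ≠ 0 := Nat.cast_ne_zero.2 (by omega)
  have hpt : ∀ t : ℝ, (N : ℝ) ^ 2 * (ldisc (vdc 2) N t) ^ 2 = (Faure.E N t) ^ 2 := by
    intro t
    unfold ldisc Faure.E Faure.cnt
    field_simp
  have hKey : (N : ℝ) ^ 2 * ∫ t in (0:ℝ)..1, (ldisc (vdc 2) N t) ^ 2 = Faure.Kv N := by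
    unfold Faure.Kv
    rw [← intervalIntegral.integral_const_mul]
    exact intervalIntegral.integral_congr fun t _ => hpt t
  calc 4 * ((N : ℝ) * L2disc (vdc 2) N) ^ 2
      = 4 * ((N : ℝ) ^ 2
          * (Real.sqrt (∫ t in (0:ℝ)..1, (ldisc (vdc 2) N t) ^ 2)) ^ 2) := by
        rw [L2disc]
        ring
    _ = 4 * ((N : ℝ) ^ 2 * ∫ t in (0:ℝ)..1, (ldisc (vdc 2) N t) ^ 2) := by
        rw [Real.sq_sqrt hX]
    _ = 4 * Faure.Kv N := by rw [hKey]
    _ = Faure.S N ^ 2 + Faure.Q N := by rw [hmain]; ring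
    _ = _ := rfl
end
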